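/- arXiv:2311.05566 — 7 statements merged into one kernel-verified Lean document; each statement's English description precedes it below -/
import Mathlib

section
/- If a perfect coloring g of a finite graph is a refinement of a perfect coloring f of the same graph, then every eigenvalue of the quotient matrix of f is an eigenvalue of the quotient matrix of g. -/
open Finset

/-- The hypercube graph `Q n` on binary words of length `n`. -/
def cubeGraph (n : ℕ) : SimpleGraph (Fin n → ZMod 2) where
  Adj x y := hammingDist x y = 1
  symm := ⟨by intro x y h; rwa [hammingDist_comm]⟩
  loopless := ⟨by intro x h; simp [hammingDist_self] at h⟩

instance (n : ℕ) : DecidableRel (cubeGraph n).Adj := fun _ _ => Nat.decEq _ _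

/-- `f` is a perfect coloring of `G` with quotient matrix `S`. -/
def IsPerfectColoring {V K : Type*} [Fintype V] [DecidableEq K]
    (G : SimpleGraph V) [DecidableRel G.Adj] (f : V → K) (S : K → K → ℕ) : Prop :=
  ∀ v j, ((G.neighborFinset v).filter (fun w => f w = j)).card = S (f v) j

/-- If a perfect coloring `g` refines a perfect coloring `f` of the same
finite graph, then every eigenvalue of the quotient matrix of `f` is an eigenvalue of
the quotient matrix of `g`. -/
theorem stmt4 {V K L : Type*} [Fintype V] [Fintype K] [DecidableEq K]
    [Fintype L] [DecidableEq L]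
    (G : SimpleGraph V) [DecidableRel G.Adj]
    (f : V → K) (hsurjf : Function.Surjective f)
    (g : V → L) (hsurjg : Function.Surjective g)
    (Sf : K → K → ℕ) (hf : IsPerfectColoring G f Sf)
    (Sg : L → L → ℕ) (hg : IsPerfectColoring G g Sg)
    (href : ∀ x y : V, f x ≠ f y → g x ≠ g y)
    (μ : ℝ)
    (hμ : Module.End.HasEigenvalue
      (Matrix.toLin' (fun i j => (Sf i j : ℝ) : Matrix K K ℝ)) μ) :
    Module.End.HasEigenvalue
      (Matrix.toLin' (fun i j => (Sg i j : ℝ) : Matrix L L ℝ)) μ := by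
  classical
  -- the induced map on colors
  set π : L → K := fun l => f (Function.surjInv hsurjg l) with hπdef
  have hπg : ∀ v, π (g v) = f v := by
    intro v
    by_contra h
    exact href _ _ h (Function.surjInv_eq hsurjg (g v))
  have hπsurj : Function.Surjective π := by
    intro k
    obtain ⟨v, hv⟩ := hsurjf k
    exact ⟨g v, by rw [hπg, hv]⟩
  -- key counting identity
  have key : ∀ v k, Sf (f v) k
      = ∑ l' ∈ univ.filter (fun l' => π l' = k), Sg (g v) l' := by
    intro v k
    rw [← hf v k]
    rw [Finset.sum_congr rfl (fun l' _ => (hg v l').symm)]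
    rw [← Finset.card_biUnion]
    · congr 1
      ext w
      simp only [Finset.mem_biUnion, Finset.mem_filter, Finset.mem_univ, true_and]
      constructor
      · rintro ⟨hw, hfw⟩
        exact ⟨g w, by rw [hπg, hfw], hw, rfl⟩
      · rintro ⟨l', hl', hw, hgw⟩
        refine ⟨hw, ?_⟩
        rw [← hπg w, hgw, hl']
    · intro x _ y _ hxy
      apply Finset.disjoint_filter_filter'
      exact Set.disjoint_left.mpr (fun w (hx : g w = x) (hy : g w = y) => hxy (hx ▸ hy ▸ rfl))
  obtain ⟨u, hu⟩ := hμ.exists_hasEigenvector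
  have humul : Matrix.mulVec (fun i j => (Sf i j : ℝ)) u = μ • u := by
    have := hu.apply_eq_smul
    exact this
  refine Module.End.hasEigenvalue_of_hasEigenvector
    (x := fun l => u (π l)) ⟨?_, ?_⟩
  · rw [Module.End.mem_eigenspace_iff]
    change Matrix.mulVec (fun i j => (Sg i j : ℝ)) (fun l => u (π l)) = _
    funext l
    have hgl : g (Function.surjInv hsurjg l) = l := Function.surjInv_eq hsurjg l
    have hfl : f (Function.surjInv hsurjg l) = π l := rfl
    calc Matrix.mulVec (fun i j => (Sg i j : ℝ)) (fun l => u (π l)) l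
        = ∑ l', (Sg l l' : ℝ) * u (π l') := rfl
      _ = ∑ k, ∑ l' ∈ univ.filter (fun l' => π l' = k), (Sg l l' : ℝ) * u (π l') := by
          rw [Finset.sum_fiberwise]
      _ = ∑ k, (Sf (π l) k : ℝ) * u k := by
          refine Finset.sum_congr rfl (fun k _ => ?_)
          have : ∀ l' ∈ univ.filter (fun l' => π l' = k),
              (Sg l l' : ℝ) * u (π l') = (Sg l l' : ℝ) * u k := by
            intro l' hl'
            rw [(Finset.mem_filter.mp hl').2]
          rw [Finset.sum_congr rfl this, ← Finset.sum_mul]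
          congr 1
          rw [← hfl, key (Function.surjInv hsurjg l) k, hgl]
          push_cast
          rfl
      _ = (Matrix.mulVec (fun i j => (Sf i j : ℝ)) u) (π l) := rfl
      _ = μ * u (π l) := by rw [humul]; rfl
  · intro h0
    obtain ⟨k, hk⟩ := Function.ne_iff.mp hu.right
    obtain ⟨l, hl⟩ := hπsurj k
    exact hk (by have := congrFun h0 l; rwa [hl] at this)
end

section
/- Let f : Z₂ⁿ → {0,1} be a non-constant perfect coloring of Qₙ (a 2-coloring) whose quotient matrix has second-largest eigenvalue θ = n − 2(t+1). Then f is t-correlation-immune: for any set of t coordinates and any fixed values on those coordinates, the number of ones of f on the resulting subcube of dimension n−t, divided by 2^{n−t}, equals the overall density of ones of f. -/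
open Finset

namespace Stmt7Aux

variable {n : ℕ}

/-- Character of the hypercube indexed by a finset of coordinates. -/
def chi (b : Finset (Fin n)) (x : Fin n → ZMod 2) : ℚ :=
  ∏ i ∈ b, (-1 : ℚ) ^ ((x i).val)

lemma zmod2_pow_add (u v : ZMod 2) :
    (-1 : ℚ) ^ ((u + v).val) = (-1 : ℚ) ^ u.val * (-1 : ℚ) ^ v.val := by
  have h2 : (2 : ZMod 2).val = 0 := by decide
  have h1 : (1 : ZMod 2).val = 1 := by decide
  have h0 : (0 : ZMod 2).val = 0 := by decide
  rcases (show ∀ w : ZMod 2, w = 0 ∨ w = 1 by decide) u with rfl | rfl <;>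
    rcases (show ∀ w : ZMod 2, w = 0 ∨ w = 1 by decide) v with rfl | rfl <;> norm_num [h0, h1, h2]

lemma chi_add (b : Finset (Fin n)) (x y : Fin n → ZMod 2) :
    chi b (x + y) = chi b x * chi b y := by
  simp only [chi, Pi.add_apply, zmod2_pow_add]
  rw [Finset.prod_mul_distrib]

lemma chi_single (b : Finset (Fin n)) (i : Fin n) :
    chi b (Pi.single i 1) = if i ∈ b then -1 else 1 := by
  unfold chi
  by_cases h : i ∈ b
  · rw [if_pos h]
    rw [Finset.prod_eq_single_of_mem i h]
    · rw [Pi.single_eq_same]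
      norm_num [show (1 : ZMod 2).val = 1 from by decide]
    · intro j _ hj
      rw [Pi.single_eq_of_ne hj]
      norm_num [show (0 : ZMod 2).val = 0 from by decide]
  · rw [if_neg h]
    apply Finset.prod_eq_one
    intro j hj
    have hji : j ≠ i := fun e => h (e ▸ hj)
    rw [Pi.single_eq_of_ne hji]
    norm_num [show (0 : ZMod 2).val = 0 from by decide]

lemma sum_chi_single (b : Finset (Fin n)) :
    ∑ i : Fin n, chi b (Pi.single i 1) = (n : ℚ) - 2 * b.card := by
  have h : ∀ i : Fin n, chi b (Pi.single i 1)
      = 1 - 2 * (if i ∈ b then (1 : ℚ) else 0) := by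
    intro i; rw [chi_single]; split <;> norm_num
  rw [Finset.sum_congr rfl (fun i _ => h i)]
  rw [Finset.sum_sub_distrib, ← Finset.mul_sum, Finset.sum_boole]
  simp [Finset.filter_mem_eq_inter]

lemma single_add_self (i : Fin n) (x : Fin n → ZMod 2) :
    x + Pi.single i 1 + Pi.single i 1 = x := by
  funext j
  simp only [Pi.add_apply]
  rw [add_assoc, CharTwo.add_self_eq_zero, add_zero]

lemma sum_reindex (i : Fin n) (F : (Fin n → ZMod 2) → ℚ) :
    ∑ x : Fin n → ZMod 2, F x = ∑ x : Fin n → ZMod 2, F (x + Pi.single i 1) := by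
  have hinv : Function.Involutive (fun x : Fin n → ZMod 2 => x + Pi.single i 1) :=
    fun x => single_add_self i x
  exact (Fintype.sum_bijective _ hinv.bijective _ _ (fun x => rfl)).symm

lemma sum_chi_eq_zero {b : Finset (Fin n)} (hb : b.Nonempty) :
    ∑ x : Fin n → ZMod 2, chi b x = 0 := by
  obtain ⟨i, hi⟩ := hb
  have h := sum_reindex i (chi b)
  simp only [chi_add, chi_single, if_pos hi, mul_neg_one,
    Finset.sum_neg_distrib] at h
  linarith

lemma neighborFinset_eq (x : Fin n → ZMod 2) :
    (cubeGraph n).neighborFinset x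
      = Finset.image (fun i => x + Pi.single i 1) Finset.univ := by
  ext y
  simp only [SimpleGraph.mem_neighborFinset, Finset.mem_image, Finset.mem_univ,
    true_and]
  constructor
  · intro hadj
    have hd : hammingDist x y = 1 := hadj
    rw [hammingDist, Finset.card_eq_one] at hd
    obtain ⟨i, hi⟩ := hd
    refine ⟨i, ?_⟩
    funext j
    by_cases hj : j = i
    · subst hj
      have : j ∈ ({j} : Finset (Fin n)) := Finset.mem_singleton_self j
      rw [← hi, Finset.mem_filter] at this
      have hne : x j ≠ y j := this.2
      have : ∀ u v : ZMod 2, u ≠ v → v = u + 1 := by decide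
      simp only [Pi.add_apply, Pi.single_eq_same]
      exact (this _ _ hne).symm
    · have : j ∉ ({i} : Finset (Fin n)) := by simp [hj]
      rw [← hi, Finset.mem_filter] at this
      push_neg at this
      have heq : x j = y j := by
        by_contra hne
        exact hne (this (Finset.mem_univ j))
      simp only [Pi.add_apply, Pi.single_eq_of_ne hj, add_zero]
      exact heq
  · rintro ⟨i, rfl⟩
    show hammingDist x (x + Pi.single i 1) = 1
    rw [hammingDist, ← Finset.card_singleton i]
    congr 1
    ext j
    simp only [Finset.mem_filter, Finset.mem_univ, true_and, Finset.mem_singleton,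
      Pi.add_apply]
    by_cases hj : j = i
    · subst hj; simp
    · simp [Pi.single_eq_of_ne hj, hj]

lemma single_inj (x : Fin n → ZMod 2) :
    Function.Injective (fun i => x + Pi.single i 1) := by
  intro i j h
  simp only [add_right_inj] at h
  by_contra hij
  have := congrFun h i
  rw [Pi.single_eq_same, Pi.single_eq_of_ne hij] at this
  exact one_ne_zero this

lemma sum_neighbors (x : Fin n → ZMod 2) (F : (Fin n → ZMod 2) → ℚ) :
    ∑ y ∈ (cubeGraph n).neighborFinset x, F y
      = ∑ i : Fin n, F (x + Pi.single i 1) := by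
  rw [neighborFinset_eq, Finset.sum_image]
  intro i _ j _ h
  exact single_inj x h

lemma degree_eq (x : Fin n → ZMod 2) :
    ((cubeGraph n).neighborFinset x).card = n := by
  rw [neighborFinset_eq, Finset.card_image_of_injective _ (single_inj x)]
  simp

end Stmt7Aux

open Stmt7Aux

/-- A non-constant perfect 2-coloring of `Qₙ` whose quotient matrix has
second-largest eigenvalue `θ = n − 2(t+1)` (for a 2×2 quotient matrix with row sums
`n`, the non-principal eigenvalue is `S₀₀ + S₁₁ − n`) is `t`-correlation-immune. -/
theorem stmt7 (n t : ℕ) (f : (Fin n → ZMod 2) → ZMod 2)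
    (S : ZMod 2 → ZMod 2 → ℕ)
    (hperf : IsPerfectColoring (cubeGraph n) f S)
    (hnc : ∃ x y, f x ≠ f y)
    (hθ : (S 0 0 : ℤ) + S 1 1 - n = (n : ℤ) - 2 * ((t : ℤ) + 1)) :
    ∀ s : Finset (Fin n), s.card = t → ∀ z : Fin n → ZMod 2,
      ((univ.filter (fun x : Fin n → ZMod 2 => (∀ i ∈ s, x i = z i) ∧ f x = 1)).card : ℚ)
          / 2 ^ (n - t)
        = ((univ.filter (fun x : Fin n → ZMod 2 => f x = 1)).card : ℚ) / 2 ^ n := by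
  intro s hs z
  classical
  -- both colors occur
  have hvals : ∀ u v : ZMod 2, u ≠ v → u = 0 ∧ v = 1 ∨ u = 1 ∧ v = 0 := by decide
  obtain ⟨v0, hv0⟩ : ∃ v, f v = 0 := by
    obtain ⟨x0, y0, hxy⟩ := hnc
    rcases hvals _ _ hxy with ⟨h1, _⟩ | ⟨_, h2⟩
    exacts [⟨x0, h1⟩, ⟨y0, h2⟩]
  -- row sum of the quotient matrix
  have hrow : S 0 1 + S 0 0 = n := by
    have h1 := hperf v0 1
    have h0 := hperf v0 0
    rw [hv0] at h1 h0
    have hsplit := Finset.card_filter_add_card_filter_not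
      (s := (cubeGraph n).neighborFinset v0) (p := fun w => f w = 1)
    have hneg : ((cubeGraph n).neighborFinset v0).filter (fun w => ¬ f w = 1)
        = ((cubeGraph n).neighborFinset v0).filter (fun w => f w = 0) := by
      refine Finset.filter_congr fun w _ => ?_
      have : ∀ u : ZMod 2, ¬ u = 1 ↔ u = 0 := by decide
      simp [this]
    rw [hneg, h1, h0, degree_eq] at hsplit
    exact hsplit
  -- the second eigenvalue, rationally
  have hθQ : (S 1 1 : ℚ) - S 0 1 = (n : ℚ) - 2 * ((t : ℚ) + 1) := by
    have hrowZ : (S 0 1 : ℤ) + S 0 0 = n := by exact_mod_cast hrow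
    have hZ : (S 1 1 : ℤ) - S 0 1 = (n : ℤ) - 2 * ((t : ℤ) + 1) := by linarith
    exact_mod_cast hZ
  set g : (Fin n → ZMod 2) → ℚ := fun x => if f x = 1 then 1 else 0 with hg
  -- local eigen-equation for the indicator g
  have hA : ∀ x, ∑ i : Fin n, g (x + Pi.single i 1)
      = (S 0 1 : ℚ) + ((S 1 1 : ℚ) - S 0 1) * g x := by
    intro x
    have hx := hperf x 1
    have hsum : ∑ i : Fin n, g (x + Pi.single i 1) = (S (f x) 1 : ℚ) := by
      rw [← sum_neighbors, ← hx]
      simp [hg, Finset.sum_boole]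
    have : f x = 0 ∨ f x = 1 := by
      have : ∀ u : ZMod 2, u = 0 ∨ u = 1 := by decide
      exact this _
    rcases this with h | h <;> rw [h] at hsum <;> rw [hsum] <;> simp [hg, h]
  set W : Finset (Fin n) → ℚ := fun b => ∑ x, chi b x * g x with hWdef
  have hW : ∀ b : Finset (Fin n), b.Nonempty → b.card ≤ t → W b = 0 := by
    intro b hb hbt
    have lhs1 : ∑ x, chi b x * (∑ i : Fin n, g (x + Pi.single i 1))
        = ((n : ℚ) - 2 * b.card) * W b := by
      calc ∑ x, chi b x * (∑ i : Fin n, g (x + Pi.single i 1))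
          = ∑ x, ∑ i : Fin n, chi b x * g (x + Pi.single i 1) := by
            simp_rw [Finset.mul_sum]
        _ = ∑ i : Fin n, ∑ x, chi b x * g (x + Pi.single i 1) := Finset.sum_comm
        _ = ∑ i : Fin n, chi b (Pi.single i 1) * W b := by
            refine Finset.sum_congr rfl fun i _ => ?_
            rw [show (∑ x, chi b x * g (x + Pi.single i 1))
                = ∑ x, chi b (x + Pi.single i 1)
                    * g (x + Pi.single i 1 + Pi.single i 1) from
              sum_reindex i (fun x => chi b x * g (x + Pi.single i 1))]
            simp_rw [chi_add, single_add_self]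
            rw [hWdef, Finset.mul_sum]
            exact Finset.sum_congr rfl fun x _ => by ring
        _ = ((n : ℚ) - 2 * b.card) * W b := by
            rw [← Finset.sum_mul, sum_chi_single]
    have lhs2 : ∑ x, chi b x * (∑ i : Fin n, g (x + Pi.single i 1))
        = ((S 1 1 : ℚ) - S 0 1) * W b := by
      have hpt : ∀ x, chi b x * ((S 0 1 : ℚ) + ((S 1 1 : ℚ) - S 0 1) * g x)
          = (S 0 1 : ℚ) * chi b x + ((S 1 1 : ℚ) - S 0 1) * (chi b x * g x) :=
        fun x => by ring
      simp_rw [hA, hpt]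
      rw [Finset.sum_add_distrib, ← Finset.mul_sum, ← Finset.mul_sum,
        sum_chi_eq_zero hb, hWdef]
      ring
    have key : ((n : ℚ) - 2 * b.card) * W b
        = ((n : ℚ) - 2 * ((t : ℚ) + 1)) * W b := by
      rw [lhs1.symm, lhs2, hθQ]
    have h2 : ((t : ℚ) + 1 - b.card) * W b = 0 := by linear_combination key / 2
    rcases mul_eq_zero.mp h2 with h | h
    · exfalso
      have hc : (b.card : ℚ) ≤ t := by exact_mod_cast hbt
      linarith
    · exact h
  have htn : t ≤ n := by
    have h := Finset.card_le_univ s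
    rw [hs] at h
    simpa using h
  set M : ℚ := ((univ.filter (fun x : Fin n → ZMod 2 => f x = 1)).card : ℚ) with hMdef
  have hM : W ∅ = M := by
    rw [hWdef, hMdef]
    simp [chi, hg, Finset.sum_boole]
  -- expansion of the subcube indicator
  have hP : ∀ x : Fin n → ZMod 2, (∏ i ∈ s, if x i = z i then (1 : ℚ) else 0)
      = (1/2 : ℚ)^t * ∑ b ∈ s.powerset, chi b x * chi b z := by
    intro x
    have hind : ∀ u v : ZMod 2, (if u = v then (1 : ℚ) else 0)
        = ((-1 : ℚ)^u.val * (-1 : ℚ)^v.val + 1) / 2 := by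
      have h1 : (1 : ZMod 2).val = 1 := by decide
      have h0 : (0 : ZMod 2).val = 0 := by decide
      intro u v; rcases (show ∀ w : ZMod 2, w = 0 ∨ w = 1 by decide) u with rfl | rfl <;>
          rcases (show ∀ w : ZMod 2, w = 0 ∨ w = 1 by decide) v with rfl | rfl <;> norm_num [h0, h1]
    calc (∏ i ∈ s, if x i = z i then (1 : ℚ) else 0)
        = ∏ i ∈ s, (((-1 : ℚ)^((x i).val) * (-1 : ℚ)^((z i).val) + 1) / 2) := by
          exact Finset.prod_congr rfl fun i _ => hind _ _
      _ = (∏ i ∈ s, ((-1 : ℚ)^((x i).val) * (-1 : ℚ)^((z i).val) + 1)) / 2^t := by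
          rw [Finset.prod_div_distrib, Finset.prod_const, hs]
      _ = (∑ b ∈ s.powerset, chi b x * chi b z) / 2^t := by
          rw [Finset.prod_add]
          congr 1
          refine Finset.sum_congr rfl fun b _ => ?_
          simp [chi, Finset.prod_mul_distrib]
      _ = (1/2 : ℚ)^t * ∑ b ∈ s.powerset, chi b x * chi b z := by
          rw [one_div, inv_pow, div_eq_mul_inv, mul_comm]
  have hN : ((univ.filter (fun x : Fin n → ZMod 2 =>
        (∀ i ∈ s, x i = z i) ∧ f x = 1)).card : ℚ) = (1/2 : ℚ)^t * M := by
    calc ((univ.filter (fun x : Fin n → ZMod 2 =>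
          (∀ i ∈ s, x i = z i) ∧ f x = 1)).card : ℚ)
        = ∑ x : Fin n → ZMod 2,
            (if ((∀ i ∈ s, x i = z i) ∧ f x = 1) then (1 : ℚ) else 0) := by
          rw [Finset.sum_boole]
      _ = ∑ x : Fin n → ZMod 2, g x * ∏ i ∈ s, (if x i = z i then (1 : ℚ) else 0) := by
          refine Finset.sum_congr rfl fun x _ => ?_
          rw [Finset.prod_boole]
          by_cases h1 : f x = 1 <;> by_cases h2 : ∀ i ∈ s, x i = z i <;>
            simp [hg, h1, h2]
      _ = ∑ x : Fin n → ZMod 2, ∑ b ∈ s.powerset,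
            (1/2 : ℚ)^t * (chi b z * (chi b x * g x)) := by
          refine Finset.sum_congr rfl fun x _ => ?_
          rw [hP, Finset.mul_sum, Finset.mul_sum]
          exact Finset.sum_congr rfl fun b _ => by ring
      _ = ∑ b ∈ s.powerset, ∑ x : Fin n → ZMod 2,
            (1/2 : ℚ)^t * (chi b z * (chi b x * g x)) := Finset.sum_comm
      _ = ∑ b ∈ s.powerset, (1/2 : ℚ)^t * (chi b z * W b) := by
          refine Finset.sum_congr rfl fun b _ => ?_
          rw [hWdef, ← Finset.mul_sum, ← Finset.mul_sum]
      _ = (1/2 : ℚ)^t * (chi ∅ z * W ∅) := by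
          rw [Finset.sum_eq_single ∅]
          · intro b hb hne
            have hbn : b.Nonempty := Finset.nonempty_iff_ne_empty.mpr hne
            have hbc : b.card ≤ t := by
              have := Finset.card_le_card (Finset.mem_powerset.mp hb)
              omega
            rw [hW b hbn hbc]
            ring
          · intro h
            exact absurd (Finset.empty_mem_powerset s) h
      _ = (1/2 : ℚ)^t * M := by rw [hM]; simp [chi]
  rw [hN]
  have h2n : (2 : ℚ)^n = 2^t * 2^(n - t) := by
    rw [← pow_add, Nat.add_sub_cancel' htn]
  rw [h2n]
  have h2t : (2 : ℚ)^t ≠ 0 := by positivity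
  have h2nt : (2 : ℚ)^(n - t) ≠ 0 := by positivity
  field_simp
  rw [one_div, inv_pow, mul_assoc, mul_comm M, ← mul_assoc, inv_mul_cancel₀ h2t, one_mul]
end

section
/- Let f : Z₂ⁿ → {0,1} be t-correlation-immune with density of ones ρ ∉ {0, 1/2, 1}. Then t ≤ 2n/3 − 1. -/
open Finset

namespace Stmt8Aux

variable {n : ℕ}

variable {n : ℕ}

/-- sign of coordinate `i`. -/
def sgn (i : Fin n) (x : Fin n → ZMod 2) : ℚ := if x i = 0 then 1 else -1

/-- character indexed by `S`. -/
def chi (S : Finset (Fin n)) (x : Fin n → ZMod 2) : ℚ := ∏ i ∈ S, sgn i x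

lemma sgn_mul_self (i : Fin n) (x : Fin n → ZMod 2) : sgn i x * sgn i x = 1 := by
  unfold sgn; split <;> norm_num

lemma sgn_add (i : Fin n) (x y : Fin n → ZMod 2) : sgn i (x + y) = sgn i x * sgn i y := by
  have hz : ∀ a : ZMod 2, a = 0 ∨ a = 1 := by decide
  unfold sgn
  simp only [Pi.add_apply]
  rcases hz (x i) with h1 | h1 <;> rcases hz (y i) with h2 | h2 <;>
    simp [h1, h2, show ((1:ZMod 2) + 1 = 0) from by decide,
      show ((1:ZMod 2) ≠ 0) from by decide] <;> norm_num

lemma chi_add (S : Finset (Fin n)) (x y : Fin n → ZMod 2) :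
    chi S (x + y) = chi S x * chi S y := by
  unfold chi
  rw [← Finset.prod_mul_distrib]
  exact Finset.prod_congr rfl fun i _ => sgn_add i x y

lemma chi_mul (S T : Finset (Fin n)) (x : Fin n → ZMod 2) :
    chi S x * chi T x = chi (symmDiff S T) x := by
  unfold chi
  rw [← Finset.prod_union_inter]
  have h1 : S ∪ T = (symmDiff S T) ∪ (S ∩ T) := (symmDiff_sup_inf (a := S) (b := T)).symm
  have h2 : Disjoint (symmDiff S T) (S ∩ T) := disjoint_symmDiff_inf S T
  rw [h1, Finset.prod_union h2, mul_assoc, ← Finset.prod_mul_distrib]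
  simp [sgn_mul_self]

/-- flipping the `i`-th coordinate -/
def upd (i : Fin n) (x : Fin n → ZMod 2) : Fin n → ZMod 2 :=
  Function.update x i (x i + 1)

lemma upd_apply_self (i : Fin n) (x : Fin n → ZMod 2) : upd i x i = x i + 1 := by
  simp [upd]

lemma upd_apply_ne (i j : Fin n) (x : Fin n → ZMod 2) (h : j ≠ i) : upd i x j = x j := by
  simp [upd, Function.update_of_ne h]

lemma upd_upd (i : Fin n) (x : Fin n → ZMod 2) : upd i (upd i x) = x := by
  funext j
  by_cases h : j = i
  · subst h
    rw [upd_apply_self, upd_apply_self]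
    have h3 : ∀ a : ZMod 2, a + 1 + 1 = a := by decide
    exact h3 _
  · rw [upd_apply_ne _ _ _ h, upd_apply_ne _ _ _ h]

lemma upd_ne (i : Fin n) (x : Fin n → ZMod 2) : upd i x ≠ x := by
  intro h
  have := congrFun h i
  rw [upd_apply_self] at this
  have h2 : ∀ a : ZMod 2, a + 1 ≠ a := by decide
  exact h2 _ this

lemma sgn_upd_self (i : Fin n) (x : Fin n → ZMod 2) : sgn i (upd i x) = - sgn i x := by
  have hz : ∀ a : ZMod 2, a = 0 ∨ a = 1 := by decide
  unfold sgn
  rw [upd_apply_self]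
  rcases hz (x i) with h1 | h1 <;>
    simp [h1, show ((1:ZMod 2) + 1 = 0) from by decide,
      show ((1:ZMod 2) ≠ 0) from by decide] <;> norm_num

lemma chi_upd (S : Finset (Fin n)) (i : Fin n) (hi : i ∈ S) (x : Fin n → ZMod 2) :
    chi S (upd i x) = - chi S x := by
  unfold chi
  rw [← Finset.mul_prod_erase S _ hi, ← Finset.mul_prod_erase S (fun j => sgn j x) hi,
    sgn_upd_self]
  have heq : ∏ j ∈ S.erase i, sgn j (upd i x) = ∏ j ∈ S.erase i, sgn j x :=
    Finset.prod_congr rfl fun j hj => by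
      unfold sgn
      rw [upd_apply_ne i j x (Finset.ne_of_mem_erase hj)]
  rw [heq]; ring

/-- key vanishing lemma: a sum of a nontrivial character over a set closed under
flipping a coordinate of the character vanishes. -/
lemma sum_chi_eq_zero (A : Finset (Fin n → ZMod 2)) (S : Finset (Fin n)) (i : Fin n)
    (hi : i ∈ S) (hA : ∀ x ∈ A, upd i x ∈ A) : ∑ x ∈ A, chi S x = 0 := by
  refine Finset.sum_involution (fun a _ => upd i a) (fun a ha => ?_)
    (fun a ha _ => upd_ne i a) (fun a ha => hA a ha) (fun a ha => upd_upd i a)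
  rw [chi_upd S i hi a]; ring

lemma sum_chi_univ (S : Finset (Fin n)) :
    ∑ x : Fin n → ZMod 2, chi S x = if S = ∅ then (2:ℚ)^n else 0 := by
  split
  · next h =>
    subst h
    simp only [chi, Finset.prod_empty, Finset.sum_const, Finset.card_univ, nsmul_eq_mul, mul_one]
    rw [Fintype.card_fun]
    push_cast
    norm_num
  · next h =>
    obtain ⟨i, hi⟩ := Finset.nonempty_iff_ne_empty.2 h
    exact sum_chi_eq_zero univ S i hi (fun x _ => Finset.mem_univ _)

lemma chi_zero_right (S : Finset (Fin n)) : chi S 0 = 1 := by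
  unfold chi sgn; simp

lemma sum_chi_dual (x : Fin n → ZMod 2) :
    ∑ S : Finset (Fin n), chi S x = if x = 0 then (2:ℚ)^n else 0 := by
  have key : ∑ S : Finset (Fin n), chi S x = ∏ i : Fin n, (sgn i x + 1) := by
    rw [Finset.prod_add]
    rw [← Finset.powerset_univ]
    exact (Finset.sum_congr rfl fun S _ => by simp [chi]).symm
  rw [key]
  split
  · next h =>
    subst h
    simp only [sgn, Pi.zero_apply, if_pos rfl]
    norm_num
  · next h =>
    have : ∃ i, x i ≠ 0 := by
      by_contra hc
      push_neg at hc
      exact h (funext hc)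
    obtain ⟨i, hi⟩ := this
    apply Finset.prod_eq_zero (Finset.mem_univ i)
    simp [sgn, hi]


lemma add_eq_zero_iff' (x y : Fin n → ZMod 2) : x + y = 0 ↔ x = y := by
  constructor
  · intro h
    funext i
    have h2 := congrFun h i
    simp only [Pi.add_apply, Pi.zero_apply] at h2
    have hz : ∀ a b : ZMod 2, a + b = 0 → a = b := by decide
    exact hz _ _ h2
  · rintro rfl
    funext i
    simp only [Pi.add_apply, Pi.zero_apply]
    have hz : ∀ a : ZMod 2, a + a = 0 := by decide
    exact hz _

lemma inversion (g : (Fin n → ZMod 2) → ℚ) (x : Fin n → ZMod 2) :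
    ∑ S : Finset (Fin n), (∑ y, g y * chi S y) * chi S x = 2^n * g x := by
  calc ∑ S : Finset (Fin n), (∑ y, g y * chi S y) * chi S x
      = ∑ S : Finset (Fin n), ∑ y, g y * chi S (y + x) := by
        refine Finset.sum_congr rfl fun S _ => ?_
        rw [Finset.sum_mul]
        exact Finset.sum_congr rfl fun y _ => by rw [mul_assoc, ← chi_add]
    _ = ∑ y, g y * ∑ S : Finset (Fin n), chi S (y + x) := by
        rw [Finset.sum_comm]
        exact Finset.sum_congr rfl fun y _ => by rw [Finset.mul_sum]
    _ = ∑ y, g y * (if y + x = 0 then (2:ℚ)^n else 0) := by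
        exact Finset.sum_congr rfl fun y _ => by rw [sum_chi_dual]
    _ = 2^n * g x := by
        rw [Finset.sum_eq_single x]
        · rw [if_pos ((add_eq_zero_iff' x x).mpr rfl)]; ring
        · intro y _ hyx
          rw [if_neg (fun h => hyx ((add_eq_zero_iff' y x).mp h)), mul_zero]
        · intro h; exact absurd (Finset.mem_univ x) h

lemma sum_chi3 (S T U : Finset (Fin n)) :
    ∑ x : Fin n → ZMod 2, chi S x * chi T x * chi U x
      = if U = symmDiff S T then (2:ℚ)^n else 0 := by
  have h1 : ∀ x, chi S x * chi T x * chi U x = chi (symmDiff (symmDiff S T) U) x :=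
    fun x => by rw [chi_mul, chi_mul]
  rw [Finset.sum_congr rfl fun x _ => h1 x, sum_chi_univ]
  by_cases h : U = symmDiff S T
  · rw [if_pos h, if_pos]
    rw [h, ← Finset.bot_eq_empty]
    exact symmDiff_self _
  · rw [if_neg h, if_neg]
    intro hc
    rw [← Finset.bot_eq_empty] at hc
    exact h (symmDiff_eq_bot.mp hc).symm

lemma card_symmDiff_eq (S T : Finset (Fin n)) :
    S.card + T.card + (symmDiff S T).card = 2 * (S ∪ T).card := by
  have h1 : (symmDiff S T ∪ (S ∩ T)).card = (symmDiff S T).card + (S ∩ T).card :=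
    Finset.card_union_of_disjoint (disjoint_symmDiff_inf S T)
  have h2 : symmDiff S T ∪ (S ∩ T) = S ∪ T := symmDiff_sup_inf S T
  have h3 := Finset.card_union_add_card_inter S T
  rw [h2] at h1
  omega

end Stmt8Aux

open Stmt8Aux in
/-- Fon-Der-Flaass bound: a `t`-correlation-immune Boolean function with
density of ones `ρ ∉ {0, 1/2, 1}` satisfies `t ≤ 2n/3 − 1`. -/
theorem stmt8 (n t : ℕ) (ht : t ≤ n) (f : (Fin n → ZMod 2) → ZMod 2)
    (hCI : ∀ s : Finset (Fin n), s.card = t → ∀ z : Fin n → ZMod 2,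
      ((univ.filter (fun x : Fin n → ZMod 2 => (∀ i ∈ s, x i = z i) ∧ f x = 1)).card : ℚ)
          / 2 ^ (n - t)
        = ((univ.filter (fun x : Fin n → ZMod 2 => f x = 1)).card : ℚ) / 2 ^ n)
    (hρ0 : ((univ.filter (fun x : Fin n → ZMod 2 => f x = 1)).card : ℚ) / 2 ^ n ≠ 0)
    (hρh : ((univ.filter (fun x : Fin n → ZMod 2 => f x = 1)).card : ℚ) / 2 ^ n ≠ 1 / 2)
    (hρ1 : ((univ.filter (fun x : Fin n → ZMod 2 => f x = 1)).card : ℚ) / 2 ^ n ≠ 1) :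
    (t : ℚ) ≤ 2 * n / 3 - 1 := by
  classical
  by_contra hlt
  push_neg at hlt
  have hnt : 2 * n < 3 * t + 3 := by
    have h1 : (2 * n : ℚ) < 3 * t + 3 := by linarith
    exact_mod_cast h1
  set M : ℕ := (univ.filter (fun x : Fin n → ZMod 2 => f x = 1)).card with hM
  set ρ : ℚ := (M : ℚ) / 2 ^ n with hρ
  set F : (Fin n → ZMod 2) → ℚ := fun x => if f x = 1 then 1 else 0 with hF
  set g : (Fin n → ZMod 2) → ℚ := fun x => F x - ρ with hg
  have hcard : Fintype.card (Fin n → ZMod 2) = 2 ^ n := by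
    rw [Fintype.card_fun]; simp
  have hMρ : (M : ℚ) = ρ * 2 ^ n := by
    rw [hρ]
    field_simp
  -- Fourier coefficients of F vanish on nonempty sets of size ≤ t
  have hWF : ∀ S : Finset (Fin n), S ≠ ∅ → S.card ≤ t →
      ∑ y : Fin n → ZMod 2, F y * chi S y = 0 := by
    intro S hSne hSt
    obtain ⟨i, hiS⟩ := Finset.nonempty_iff_ne_empty.2 hSne
    obtain ⟨s, hSs, hscard⟩ := Finset.exists_superset_card_eq hSt (by simpa using ht)
    set φ : (Fin n → ZMod 2) → (Fin n → ZMod 2) := fun y j => if j ∈ s then y j else 0 with hφ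
    set B : Finset (Fin n → ZMod 2) := univ.filter (fun z => ∀ j, j ∉ s → z j = 0) with hB
    set A : Finset (Fin n → ZMod 2) := univ.filter (fun y => f y = 1) with hA
    have step1 : ∑ y : Fin n → ZMod 2, F y * chi S y = ∑ y ∈ A, chi S y := by
      rw [hA, Finset.sum_filter]
      refine Finset.sum_congr rfl fun y _ => ?_
      simp only [hF]
      split <;> simp
    have hmaps : ∀ y ∈ A, φ y ∈ B := by
      intro y _
      simp only [hB, Finset.mem_filter, Finset.mem_univ, true_and, hφ]
      intro j hj
      rw [if_neg hj]
    have step2 : ∑ y ∈ A, chi S y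
        = ∑ z ∈ B, ∑ y ∈ A.filter (fun y => φ y = z), chi S y :=
      (Finset.sum_fiberwise_of_maps_to hmaps _).symm
    have hfiber : ∀ z ∈ B, A.filter (fun y => φ y = z)
        = univ.filter (fun x : Fin n → ZMod 2 => (∀ i ∈ s, x i = z i) ∧ f x = 1) := by
      intro z hz
      ext y
      simp only [hA, Finset.mem_filter, Finset.mem_univ, true_and]
      constructor
      · rintro ⟨hf, hyz⟩
        refine ⟨fun j hj => ?_, hf⟩
        have h2 := congrFun hyz j
        simp only [hφ] at h2
        rw [if_pos hj] at h2
        exact h2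
      · rintro ⟨hcoord, hf⟩
        refine ⟨hf, funext fun j => ?_⟩
        simp only [hφ]
        by_cases hj : j ∈ s
        · rw [if_pos hj]; exact hcoord j hj
        · rw [if_neg hj]
          simp only [hB, Finset.mem_filter, Finset.mem_univ, true_and] at hz
          exact (hz j hj).symm
    have hcardfiber : ∀ z ∈ B, ((A.filter (fun y => φ y = z)).card : ℚ)
        = ρ * 2 ^ (n - t) := by
      intro z hz
      rw [hfiber z hz]
      have h := hCI s hscard z
      have h2 : ((2 : ℚ) ^ (n - t)) ≠ 0 := by positivity
      rw [div_eq_iff h2] at h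
      exact h
    have hchieq : ∀ z ∈ B, ∑ y ∈ A.filter (fun y => φ y = z), chi S y
        = ((A.filter (fun y => φ y = z)).card : ℚ) * chi S z := by
      intro z _
      rw [Finset.sum_congr rfl (fun y hy => show chi S y = chi S z from ?_),
        Finset.sum_const, nsmul_eq_mul]
      have hyz : φ y = z := (Finset.mem_filter.mp hy).2
      unfold Stmt8Aux.chi
      refine Finset.prod_congr rfl fun j hj => ?_
      have hjs : j ∈ s := hSs hj
      have h2 := congrFun hyz j
      simp only [hφ] at h2
      rw [if_pos hjs] at h2
      unfold Stmt8Aux.sgn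
      rw [h2]
    have hclose : ∀ z ∈ B, upd i z ∈ B := by
      intro z hz
      simp only [hB, Finset.mem_filter, Finset.mem_univ, true_and] at hz ⊢
      intro j hj
      have hji : j ≠ i := fun h => hj (h ▸ hSs hiS)
      rw [upd_apply_ne i j z hji]
      exact hz j hj
    have hsumB : ∑ z ∈ B, chi S z = 0 := sum_chi_eq_zero B S i hiS hclose
    rw [step1, step2,
      Finset.sum_congr rfl (fun z hz => by rw [hchieq z hz, hcardfiber z hz]),
      ← Finset.mul_sum, hsumB, mul_zero]
  -- Fourier coefficients of g vanish on all sets of size ≤ t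
  have hW : ∀ S : Finset (Fin n), S.card ≤ t → ∑ y : Fin n → ZMod 2, g y * chi S y = 0 := by
    intro S hS
    have hsplit : ∀ y : Fin n → ZMod 2, g y * chi S y = F y * chi S y - ρ * chi S y := by
      intro y; simp only [hg]; ring
    rw [Finset.sum_congr rfl fun y _ => hsplit y, Finset.sum_sub_distrib]
    by_cases hSe : S = ∅
    · subst hSe
      have hc : ∀ y : Fin n → ZMod 2, chi (∅ : Finset (Fin n)) y = 1 := fun y => by
        simp [Stmt8Aux.chi]
      have e1 : ∑ y : Fin n → ZMod 2, F y * chi (∅ : Finset (Fin n)) y = (M : ℚ) := by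
        rw [Finset.sum_congr rfl fun y _ => by rw [hc y, mul_one]]
        simp only [hF]
        rw [Finset.sum_boole]
      have e2 : ∑ y : Fin n → ZMod 2, ρ * chi (∅ : Finset (Fin n)) y = (M : ℚ) := by
        rw [Finset.sum_congr rfl fun y _ => by rw [hc y, mul_one]]
        rw [Finset.sum_const, Finset.card_univ, hcard, nsmul_eq_mul, hMρ]
        push_cast
        ring
      rw [e1, e2, sub_self]
    · have h1 := hWF S hSe hS
      have h2 : ∑ y : Fin n → ZMod 2, ρ * chi S y = 0 := by
        rw [← Finset.mul_sum, sum_chi_univ, if_neg hSe, mul_zero]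
      rw [h1, h2, sub_zero]
  -- the cube identity
  set a : Finset (Fin n) → ℚ := fun S => ∑ y : Fin n → ZMod 2, g y * chi S y with ha
  have hpt : ∀ x : Fin n → ZMod 2, ∑ S : Finset (Fin n), a S * chi S x = 2 ^ n * g x := by
    intro x
    simp only [ha]
    exact inversion g x
  have hcube : ∑ x : Fin n → ZMod 2, (2 ^ n * g x) ^ 3
      = ∑ S : Finset (Fin n), ∑ T : Finset (Fin n), ∑ U : Finset (Fin n),
          a S * a T * a U * (if U = symmDiff S T then (2:ℚ) ^ n else 0) := by
    have hexp : ∀ x : Fin n → ZMod 2, (2 ^ n * g x) ^ 3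
        = ∑ S : Finset (Fin n), ∑ T : Finset (Fin n), ∑ U : Finset (Fin n),
            a S * a T * a U * (chi S x * chi T x * chi U x) := by
      intro x
      rw [← hpt x]
      have hcube3 : ∀ b : ℚ, b ^ 3 = b * (b * b) := fun b => by ring
      rw [hcube3, Finset.sum_mul_sum, Finset.sum_mul_sum]
      refine Finset.sum_congr rfl fun S _ => Finset.sum_congr rfl fun T _ => ?_
      rw [Finset.mul_sum]
      exact Finset.sum_congr rfl fun U _ => by ring
    rw [Finset.sum_congr rfl fun x _ => hexp x]
    rw [Finset.sum_comm]
    refine Finset.sum_congr rfl fun S _ => ?_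
    rw [Finset.sum_comm]
    refine Finset.sum_congr rfl fun T _ => ?_
    rw [Finset.sum_comm]
    refine Finset.sum_congr rfl fun U _ => ?_
    rw [← Finset.mul_sum, sum_chi3]
  have hzero : ∀ S T U : Finset (Fin n),
      a S * a T * a U * (if U = symmDiff S T then (2:ℚ) ^ n else 0) = 0 := by
    intro S T U
    by_cases h : U = symmDiff S T
    · rw [if_pos h]
      have hb := card_symmDiff_eq S T
      have hun : (S ∪ T).card ≤ n := by
        have := Finset.card_le_univ (S ∪ T)
        simpa using this
      have hsmall : S.card ≤ t ∨ T.card ≤ t ∨ U.card ≤ t := by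
        rw [h]
        omega
      rcases hsmall with hc | hc | hc
      · have h0 : a S = 0 := by simp only [ha]; exact hW S hc
        rw [h0]; ring
      · have h0 : a T = 0 := by simp only [ha]; exact hW T hc
        rw [h0]; ring
      · have h0 : a U = 0 := by simp only [ha]; exact hW U hc
        rw [h0]; ring
    · rw [if_neg h]; ring
  have hsum0 : ∑ x : Fin n → ZMod 2, (g x) ^ 3 = 0 := by
    have h1 : ∑ x : Fin n → ZMod 2, (2 ^ n * g x) ^ 3 = 0 := by
      rw [hcube]
      exact Finset.sum_eq_zero fun S _ => Finset.sum_eq_zero fun T _ =>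
        Finset.sum_eq_zero fun U _ => hzero S T U
    have h2 : ∑ x : Fin n → ZMod 2, (2 ^ n * g x) ^ 3
        = (2:ℚ) ^ (3 * n) * ∑ x : Fin n → ZMod 2, (g x) ^ 3 := by
      rw [Finset.mul_sum]
      exact Finset.sum_congr rfl fun x _ => by
        rw [mul_pow, ← pow_mul, Nat.mul_comm n 3]
    rw [h2] at h1
    have h3 : ((2:ℚ) ^ (3 * n)) ≠ 0 := by positivity
    exact (mul_eq_zero.mp h1).resolve_left h3
  -- pointwise evaluation of the cube sum
  have hMle : M ≤ 2 ^ n := by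
    rw [hM, ← hcard, ← Finset.card_univ]
    exact Finset.card_filter_le _ _
  have hsumval : ∑ x : Fin n → ZMod 2, (g x) ^ 3
      = (M : ℚ) * (1 - ρ) ^ 3 + ((2:ℚ) ^ n - M) * (-ρ) ^ 3 := by
    have hgv : ∀ x : Fin n → ZMod 2, (g x) ^ 3
        = if f x = 1 then (1 - ρ) ^ 3 else (-ρ) ^ 3 := by
      intro x
      simp only [hg, hF]
      split <;> ring
    rw [Finset.sum_congr rfl fun x _ => hgv x, Finset.sum_ite, Finset.sum_const,
      Finset.sum_const, nsmul_eq_mul, nsmul_eq_mul]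
    have hc1 : (univ.filter (fun x : Fin n → ZMod 2 => f x = 1)).card = M := hM.symm
    have hc2 : (univ.filter (fun x : Fin n → ZMod 2 => ¬ f x = 1)).card = 2 ^ n - M := by
      have := Finset.card_filter_add_card_filter_not
        (s := (univ : Finset (Fin n → ZMod 2))) (p := fun x => f x = 1)
      rw [Finset.card_univ, hcard] at this
      omega
    rw [hc1, hc2]
    push_cast [Nat.cast_sub hMle]
    ring
  -- final contradiction
  have hkey : (2:ℚ) ^ n * (ρ * (1 - ρ) * (1 - 2 * ρ)) = 0 := by
    calc (2:ℚ) ^ n * (ρ * (1 - ρ) * (1 - 2 * ρ))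
        = (M : ℚ) * (1 - ρ) ^ 3 + ((2:ℚ) ^ n - M) * (-ρ) ^ 3 := by rw [hMρ]; ring
      _ = 0 := by rw [← hsumval]; exact hsum0
  have h2n : ((2:ℚ) ^ n) ≠ 0 := by positivity
  have h1ρ : (1 : ℚ) - ρ ≠ 0 := sub_ne_zero.mpr (Ne.symm hρ1)
  have h12ρ : (1 : ℚ) - 2 * ρ ≠ 0 := fun h => hρh (by linarith)
  exact (mul_ne_zero h2n (mul_ne_zero (mul_ne_zero hρ0 h1ρ) h12ρ)) hkey
end

section
/- Let f be a perfect k-coloring of Q_{n−1} with quotient matrix S. Define g on Qₙ by g(x₀,…,x_{n−2},x_{n−1}) = (x_{n−1}, f(x₀,…,x_{n−2})). Then g is a perfect 2k-coloring of Qₙ with quotient matrix T = [[S, Id],[Id, S]] (block form). Moreover, every eigenvalue λ of S gives rise to eigenvalues λ+1 and λ−1 of T: if v is a λ-eigenvector of S, then (v,v) is a (λ+1)-eigenvector and (v,−v) is a (λ−1)-eigenvector of T. -/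
open Finset

lemma hamming_snoc {m : ℕ} (a a' : Fin m → ZMod 2) (b b' : ZMod 2) :
    hammingDist (Fin.snoc a b) (Fin.snoc a' b' : Fin (m+1) → ZMod 2)
      = hammingDist a a' + if b = b' then 0 else 1 := by
  classical
  simp only [hammingDist, Finset.card_filter]
  rw [Fin.sum_univ_castSucc]
  simp only [Fin.snoc_castSucc, Fin.snoc_last]
  by_cases h : b = b' <;> simp [h]

def snocEquiv (m : ℕ) : (Fin m → ZMod 2) × ZMod 2 ≃ (Fin (m+1) → ZMod 2) where
  toFun p := Fin.snoc p.1 p.2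
  invFun w := (fun i => w i.castSucc, w (Fin.last m))
  left_inv p := by simp
  right_inv w := Fin.snoc_init_self w

@[simp] lemma snocEquiv_apply (m : ℕ) (p : (Fin m → ZMod 2) × ZMod 2) :
    snocEquiv m p = Fin.snoc p.1 p.2 := rfl

lemma count_aux {m : ℕ} {K : Type*} [Fintype K] [DecidableEq K]
    (f : (Fin m → ZMod 2) → K) (S : K → K → ℕ)
    (hperf : IsPerfectColoring (cubeGraph m) f S)
    (a : Fin m → ZMod 2) (t b : ZMod 2) (c : K) :
    (((cubeGraph (m+1)).neighborFinset (Fin.snoc a t)).filter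
       (fun w => (w (Fin.last m), f (fun i => w i.castSucc)) = (b, c))).card
    = if t = b then S (f a) c else if f a = c then 1 else 0 := by
  classical
  rw [← Finset.card_equiv (snocEquiv m) (t := _) (fun p => ?_)
      (s := univ.filter (fun p : (Fin m → ZMod 2) × ZMod 2 =>
        (hammingDist a p.1 + (if t = p.2 then 0 else 1) = 1) ∧ p.2 = b ∧ f p.1 = c))]
  · by_cases htb : t = b
    · subst htb
      rw [if_pos rfl, ← hperf a c]
      apply Finset.card_nbij' (i := Prod.fst) (j := fun w => (w, t))
      · intro p hp
        simp only [mem_coe, mem_filter, mem_univ, true_and] at hp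
        obtain ⟨h1, h2, h3⟩ := hp
        subst h2
        have h1' : hammingDist a p.1 = 1 := by simpa using h1
        simp only [mem_coe, mem_filter, SimpleGraph.mem_neighborFinset]; exact ⟨h1', h3⟩
      · intro w hw
        simp only [mem_coe, mem_filter, SimpleGraph.mem_neighborFinset] at hw
        have h1 : hammingDist a w = 1 := hw.1
        simp [h1, hw.2]
      · intro p hp
        simp only [mem_coe, mem_filter, mem_univ, true_and] at hp
        exact Prod.ext rfl hp.2.1.symm
      · intro w hw; rfl
    · rw [if_neg htb]
      have hset : (univ.filter (fun p : (Fin m → ZMod 2) × ZMod 2 =>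
          (hammingDist a p.1 + (if t = p.2 then 0 else 1) = 1) ∧ p.2 = b ∧ f p.1 = c))
          = if f a = c then {(a, b)} else ∅ := by
        ext p
        simp only [mem_filter, mem_univ, true_and]
        by_cases hfc : f a = c
        · simp only [if_pos hfc, mem_singleton]
          constructor
          · rintro ⟨h1, h2, h3⟩
            subst h2
            rw [if_neg htb] at h1
            have h0 : hammingDist a p.1 = 0 := by omega
            exact Prod.ext (hammingDist_eq_zero.mp h0).symm rfl
          · rintro rfl
            simp [htb, hfc]
        · simp only [if_neg hfc, notMem_empty, iff_false]
          rintro ⟨h1, h2, h3⟩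
          subst h2
          rw [if_neg htb] at h1
          have h0 : hammingDist a p.1 = 0 := by omega
          rw [hammingDist_eq_zero.mp h0] at hfc
          exact hfc h3
      rw [hset]
      by_cases hfc : f a = c <;> simp [hfc]
  · simp only [mem_filter, mem_univ, true_and, SimpleGraph.mem_neighborFinset,
      snocEquiv_apply]
    have hadj : (cubeGraph (m+1)).Adj (Fin.snoc a t) (Fin.snoc p.1 p.2) ↔
        hammingDist a p.1 + (if t = p.2 then 0 else 1) = 1 := by
      show hammingDist _ _ = 1 ↔ _
      rw [hamming_snoc]
    have hcol : ((Fin.snoc p.1 p.2 : Fin (m+1) → ZMod 2) (Fin.last m),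
          f fun i => (Fin.snoc p.1 p.2 : Fin (m+1) → ZMod 2) i.castSucc) = (b, c)
        ↔ p.2 = b ∧ f p.1 = c := by
      simp [Prod.ext_iff]
    rw [hadj, hcol]

lemma zmod2univ : (univ : Finset (ZMod 2)) = {0, 1} := by decide

lemma zmod2cases (x : ZMod 2) : x = 0 ∨ x = 1 := by revert x; decide

/-- From a perfect `k`-coloring `f` of `Q_{n−1}` one gets a perfect
`2k`-coloring `g(x) = (x_{n−1}, f(x₀,…,x_{n−2}))` of `Qₙ` with quotient matrix
`[[S, Id],[Id, S]]`; each `λ`-eigenvector `v` of `S` gives a `(λ+1)`-eigenvector `(v,v)`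
and a `(λ−1)`-eigenvector `(v,−v)` of the new quotient matrix. -/
theorem stmt10 (m : ℕ) {K : Type*} [Fintype K] [DecidableEq K]
    (f : (Fin m → ZMod 2) → K) (S : K → K → ℕ)
    (hperf : IsPerfectColoring (cubeGraph m) f S) :
    IsPerfectColoring (cubeGraph (m + 1))
        (fun x => (x (Fin.last m), f (fun i => x i.castSucc)))
        (fun p q : ZMod 2 × K =>
          if p.1 = q.1 then S p.2 q.2 else if p.2 = q.2 then 1 else 0) ∧
      ∀ (lam : ℝ) (v : K → ℝ), v ≠ 0 →
        Matrix.mulVec (fun i j => (S i j : ℝ) : Matrix K K ℝ) v = lam • v →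
        ((fun p : ZMod 2 × K => v p.2) ≠ 0 ∧
          Matrix.mulVec
            (fun p q => ((if p.1 = q.1 then S p.2 q.2 else if p.2 = q.2 then 1 else 0 : ℕ) : ℝ)
              : Matrix (ZMod 2 × K) (ZMod 2 × K) ℝ)
            (fun p : ZMod 2 × K => v p.2)
          = (lam + 1) • (fun p : ZMod 2 × K => v p.2)) ∧
        ((fun p : ZMod 2 × K => if p.1 = 0 then v p.2 else -v p.2) ≠ 0 ∧
          Matrix.mulVec
            (fun p q => ((if p.1 = q.1 then S p.2 q.2 else if p.2 = q.2 then 1 else 0 : ℕ) : ℝ)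
              : Matrix (ZMod 2 × K) (ZMod 2 × K) ℝ)
            (fun p : ZMod 2 × K => if p.1 = 0 then v p.2 else -v p.2)
          = (lam - 1) • (fun p : ZMod 2 × K => if p.1 = 0 then v p.2 else -v p.2)) := by
  classical
  constructor
  · intro x j
    obtain ⟨b, c⟩ := j
    have hx : x = Fin.snoc (fun i => x i.castSucc) (x (Fin.last m)) :=
      (Fin.snoc_init_self x).symm
    have key := count_aux f S hperf (fun i => x i.castSucc) (x (Fin.last m)) b c
    rw [← hx] at key
    exact key
  · intro lam v hv hev
    have hrow : ∀ k, ∑ c, (S k c : ℝ) * v c = lam * v k := by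
      intro k
      have h := congrFun hev k
      simpa [Matrix.mulVec, dotProduct] using h
    have hrow' : ∀ k, ∑ c, (S k c : ℝ) * (-v c) = -(lam * v k) := by
      intro k
      rw [← hrow k, ← Finset.sum_neg_distrib]
      exact Finset.sum_congr rfl (fun c _ => (mul_neg _ _))
    have hid : ∀ (k : K) (w : K → ℝ),
        ∑ c, ((if k = c then (1:ℕ) else 0 : ℕ) : ℝ) * w c = w k := by
      intro k w
      simp [ite_mul, Finset.sum_ite_eq]
    obtain ⟨k, hk⟩ := Function.ne_iff.mp hv
    refine ⟨⟨?_, ?_⟩, ?_, ?_⟩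
    · intro h; exact hk (congrFun h ((0 : ZMod 2), k))
    · funext p
      obtain ⟨pb, pk⟩ := p
      show (∑ q : ZMod 2 × K, _) = _
      rw [Fintype.sum_prod_type]
      rw [zmod2univ, Finset.sum_insert (by decide), Finset.sum_singleton]
      rcases zmod2cases pb with rfl | rfl
      · have e1 : ∀ c : K,
            ((if ((0:ZMod 2), pk).1 = ((0:ZMod 2), c).1 then S pk c
              else if pk = c then 1 else 0 : ℕ) : ℝ)
            = (S pk c : ℝ) := fun c => by rw [if_pos rfl]
        have e2 : ∀ c : K,
            ((if ((0:ZMod 2), pk).1 = ((1:ZMod 2), c).1 then S pk c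
              else if pk = c then 1 else 0 : ℕ) : ℝ)
            = ((if pk = c then (1:ℕ) else 0 : ℕ) : ℝ) := fun c => by simp
        simp only [e1, e2, if_true]
        rw [hrow, hid pk (fun c => v c)]
        show lam * v pk + v pk = (lam + 1) * v pk
        ring
      · have e1 : ∀ c : K,
            ((if ((1:ZMod 2), pk).1 = ((0:ZMod 2), c).1 then S pk c
              else if pk = c then 1 else 0 : ℕ) : ℝ)
            = ((if pk = c then (1:ℕ) else 0 : ℕ) : ℝ) := fun c => by simp
        have e2 : ∀ c : K,
            ((if ((1:ZMod 2), pk).1 = ((1:ZMod 2), c).1 then S pk c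
              else if pk = c then 1 else 0 : ℕ) : ℝ)
            = (S pk c : ℝ) := fun c => by rw [if_pos rfl]
        simp only [e1, e2, if_true]
        rw [hrow, hid pk (fun c => v c)]
        show v pk + lam * v pk = (lam + 1) * v pk
        ring
    · intro h
      have h0 := congrFun h ((0 : ZMod 2), k)
      simp at h0
      exact hk h0
    · funext p
      obtain ⟨pb, pk⟩ := p
      show (∑ q : ZMod 2 × K, _) = _
      rw [Fintype.sum_prod_type]
      rw [zmod2univ, Finset.sum_insert (by decide), Finset.sum_singleton]
      have u0 : ∀ c : K, (if ((0:ZMod 2), c).1 = 0 then v c else -v c) = v c :=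
        fun c => by rw [if_pos rfl]
      have u1 : ∀ c : K, (if ((1:ZMod 2), c).1 = 0 then v c else -v c) = -v c :=
        fun c => by simp
      rcases zmod2cases pb with rfl | rfl
      · have e1 : ∀ c : K,
            ((if ((0:ZMod 2), pk).1 = ((0:ZMod 2), c).1 then S pk c
              else if pk = c then 1 else 0 : ℕ) : ℝ)
            = (S pk c : ℝ) := fun c => by rw [if_pos rfl]
        have e2 : ∀ c : K,
            ((if ((0:ZMod 2), pk).1 = ((1:ZMod 2), c).1 then S pk c
              else if pk = c then 1 else 0 : ℕ) : ℝ)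
            = ((if pk = c then (1:ℕ) else 0 : ℕ) : ℝ) := fun c => by simp
        simp only [e1, e2, u0, u1, if_true]
        rw [hrow, hid pk (fun c => -v c)]
        show lam * v pk + -v pk = (lam - 1) * (if ((0:ZMod 2), pk).1 = 0 then v pk else -v pk)
        rw [if_pos rfl]; ring
      · have e1 : ∀ c : K,
            ((if ((1:ZMod 2), pk).1 = ((0:ZMod 2), c).1 then S pk c
              else if pk = c then 1 else 0 : ℕ) : ℝ)
            = ((if pk = c then (1:ℕ) else 0 : ℕ) : ℝ) := fun c => by simp
        have e2 : ∀ c : K,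
            ((if ((1:ZMod 2), pk).1 = ((1:ZMod 2), c).1 then S pk c
              else if pk = c then 1 else 0 : ℕ) : ℝ)
            = (S pk c : ℝ) := fun c => by rw [if_pos rfl]
        simp only [e1, e2, u0, u1, if_true]
        rw [hrow', hid pk (fun c => v c)]
        show v pk + -(lam * v pk) = (lam - 1) * (if ((1:ZMod 2), pk).1 = 0 then v pk else -v pk)
        have : (if ((1:ZMod 2), pk).1 = 0 then v pk else -v pk) = -v pk := by simp
        rw [this]; ring
end

section
/- Let f and g be {0,1}-valued perfect 2-colorings of Q_{n−2} with quotient matrices ((n−2−b, b),(b, n−2−b)) and ((n−2−c, c),(c, n−2−c)) respectively. Define h on Qₙ by: h(x, 0, 0) = f(x), h(x, 1, 1) = 1 − f(x), h(x, 0, 1) = 2 + g(x), h(x, 1, 0) = 3 − g(x), where x ∈ Z₂^{n−2} and the last two coordinates are indicated. Then h is a perfect 4-coloring of Qₙ with quotient matrix T = [[n−2−b, b, 1, 1],[b, n−2−b, 1, 1],[1, 1, n−2−c, c],[1, 1, c, n−2−c]], and T has eigenvalues n, n−4, n−2(b+1), n−2(c+1). -/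
open Finset

namespace Stmt11Aux

lemma lt2 (m : ℕ) : m < m + 2 := by omega

lemma lt1 (m : ℕ) : m + 1 < m + 2 := by omega

def flip {n : ℕ} (v : Fin n → ZMod 2) (i : Fin n) : Fin n → ZMod 2 :=
  Function.update v i (v i + 1)

lemma zmod2_cases (a : ZMod 2) : a = 0 ∨ a = 1 := by revert a; decide

lemma zmod2_ne (a b : ZMod 2) (h : a ≠ b) : b = a + 1 := by revert a b; decide

lemma zmod2_self_ne (a : ZMod 2) : a ≠ a + 1 := by revert a; decide

lemma adj_iff {n} (v w : Fin n → ZMod 2) :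
    (cubeGraph n).Adj v w ↔ ∃ i, w = flip v i := by
  constructor
  · intro h
    have h' : (univ.filter fun i => v i ≠ w i).card = 1 := h
    rw [Finset.card_eq_one] at h'
    obtain ⟨i, hi⟩ := h'
    have hmem : ∀ j, v j ≠ w j ↔ j = i := by
      intro j
      constructor
      · intro hj
        have : j ∈ univ.filter fun i => v i ≠ w i := by simp [hj]
        rw [hi] at this; simpa using this
      · rintro rfl
        have : j ∈ univ.filter fun i => v i ≠ w i := by
          rw [hi]; exact Finset.mem_singleton_self j
        simpa using this
    refine ⟨i, funext fun j => ?_⟩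
    by_cases hj : j = i
    · subst hj
      have := zmod2_ne _ _ ((hmem j).mpr rfl)
      rw [this, flip, Function.update_self]
    · have : ¬ (v j ≠ w j) := fun hh => hj ((hmem j).mp hh)
      push_neg at this
      rw [← this, flip, Function.update_of_ne hj]
  · rintro ⟨i, rfl⟩
    show (univ.filter fun j => v j ≠ flip v i j).card = 1
    have : (univ.filter fun j => v j ≠ flip v i j) = {i} := by
      ext j
      simp only [Finset.mem_filter, Finset.mem_univ, true_and, Finset.mem_singleton]
      constructor
      · intro hj
        by_contra hji
        exact hj (by rw [flip, Function.update_of_ne hji])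
      · rintro rfl
        rw [flip, Function.update_self]; exact zmod2_self_ne _
    rw [this, Finset.card_singleton]

lemma flip_injective {n} (v : Fin n → ZMod 2) : Function.Injective (flip v) := by
  intro i j h
  by_contra hij
  have h1 : flip v i i = v i + 1 := Function.update_self _ _ _
  have h2 : flip v j i = v i := Function.update_of_ne hij _ _
  rw [h] at h1
  rw [h1] at h2
  exact zmod2_self_ne _ h2.symm

lemma neighborFinset_eq {n} (v : Fin n → ZMod 2) :
    (cubeGraph n).neighborFinset v = univ.image (flip v) := by
  ext w
  rw [SimpleGraph.mem_neighborFinset, adj_iff]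
  simp [eq_comm]

lemma count_eq {n} (v : Fin n → ZMod 2) (p : (Fin n → ZMod 2) → Prop) [DecidablePred p] :
    (((cubeGraph n).neighborFinset v).filter p).card
      = (univ.filter fun i => p (flip v i)).card := by
  rw [neighborFinset_eq, Finset.filter_image, Finset.card_image_of_injective _ (flip_injective v)]

lemma degree_eq {n} (v : Fin n → ZMod 2) : ((cubeGraph n).neighborFinset v).card = n := by
  rw [neighborFinset_eq, Finset.card_image_of_injective _ (flip_injective v), Finset.card_univ,
    Fintype.card_fin]

def col (s t : ZMod 2) (a b : Fin 2) : Fin 4 :=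
  if s = 0 then (if t = 0 then (if a = 0 then (0:Fin 4) else 1) else (if b = 0 then 2 else 3))
  else (if t = 0 then (if b = 0 then 3 else 2) else (if a = 0 then 1 else 0))

lemma fin2_cases (a : Fin 2) : a = 0 ∨ a = 1 := by revert a; decide

lemma ififf : ∀ (y : Fin 2) (p q j : Fin 4),
    ((if y = 0 then p else q) = j) ↔ ((y = 0 ∧ p = j) ∨ (y = 1 ∧ q = j)) := by decide

lemma flipind : ∀ y : Fin 2, (if y = 0 then (0:ℕ) else 1) = (if y = 1 then 1 else 0) := by decide

lemma key {m b c : ℕ} (F G : Fin m → Fin 2) (a e : Fin 2) (s t : ZMod 2) (j : Fin 4)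
    (hF : ∀ k, (∑ i : Fin m, if F i = k then 1 else 0) = if a = k then m - b else b)
    (hG : ∀ k, (∑ i : Fin m, if G i = k then 1 else 0) = if e = k then m - c else c) :
    ((∑ i : Fin m, if col s t (F i) (G i) = j then 1 else 0)
      + (if col (s+1) t a e = j then 1 else 0)) + (if col s (t+1) a e = j then 1 else 0)
    = (if (col s t a e).val ≤ 1 then
        (if j.val ≤ 1 then (if col s t a e = j then m - b else b) else 1)
       else (if j.val ≤ 1 then 1 else (if col s t a e = j then m - c else c))) := by
  rcases zmod2_cases s with rfl | rfl <;> rcases zmod2_cases t with rfl | rfl <;>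
    rcases fin2_cases a with rfl | rfl <;> rcases fin2_cases e with rfl | rfl <;>
    fin_cases j <;>
    simp +decide [col, ififf, flipind, hF 0, hF 1, hG 0, hG 1]

def res {m : ℕ} (w : Fin (m+2) → ZMod 2) : Fin m → ZMod 2 := fun i => w (i.castSucc.castSucc)

lemma inner_ne_m {m : ℕ} (i : Fin m) :
    (⟨m, lt2 m⟩ : Fin (m+2)) ≠ i.castSucc.castSucc := by
  simp only [ne_eq, Fin.ext_iff, Fin.coe_castSucc]
  omega

lemma inner_ne_m1 {m : ℕ} (i : Fin m) :
    (⟨m+1, lt1 m⟩ : Fin (m+2)) ≠ i.castSucc.castSucc := by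
  simp only [ne_eq, Fin.ext_iff, Fin.coe_castSucc]
  omega

lemma m_ne_m1 {m : ℕ} : (⟨m+1, lt1 m⟩ : Fin (m+2)) ≠ ⟨m, lt2 m⟩ := by
  simp [Fin.ext_iff]

lemma e1 {m : ℕ} (v : Fin (m+2) → ZMod 2) (i : Fin m) :
    flip v (i.castSucc.castSucc) ⟨m, lt2 m⟩ = v ⟨m, lt2 m⟩ :=
  Function.update_of_ne (inner_ne_m i) _ _

lemma e2 {m : ℕ} (v : Fin (m+2) → ZMod 2) (i : Fin m) :
    flip v (i.castSucc.castSucc) ⟨m+1, lt1 m⟩ = v ⟨m+1, lt1 m⟩ :=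
  Function.update_of_ne (inner_ne_m1 i) _ _

lemma e3 {m : ℕ} (v : Fin (m+2) → ZMod 2) (i : Fin m) :
    res (flip v (i.castSucc.castSucc)) = flip (res v) i := by
  funext j
  by_cases hj : j = i
  · subst hj
    show flip v (j.castSucc.castSucc) (j.castSucc.castSucc) = _
    rw [flip, Function.update_self, flip, Function.update_self]
    rfl
  · have hne : j.castSucc.castSucc ≠ i.castSucc.castSucc := by
      simpa [Fin.ext_iff] using fun hh => hj (Fin.ext hh)
    show flip v (i.castSucc.castSucc) (j.castSucc.castSucc) = _
    rw [flip, Function.update_of_ne hne, flip, Function.update_of_ne hj]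
    rfl

lemma e4 {m : ℕ} (v : Fin (m+2) → ZMod 2) :
    flip v ⟨m, lt2 m⟩ ⟨m, lt2 m⟩ = v ⟨m, lt2 m⟩ + 1 :=
  Function.update_self _ _ _

lemma e5 {m : ℕ} (v : Fin (m+2) → ZMod 2) :
    flip v ⟨m, lt2 m⟩ ⟨m+1, lt1 m⟩ = v ⟨m+1, lt1 m⟩ :=
  Function.update_of_ne m_ne_m1 _ _

lemma e6 {m : ℕ} (v : Fin (m+2) → ZMod 2) :
    res (flip v ⟨m, lt2 m⟩) = res v := by
  funext j
  show flip v _ (j.castSucc.castSucc) = _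
  rw [flip, Function.update_of_ne (inner_ne_m j).symm]
  rfl

lemma e7 {m : ℕ} (v : Fin (m+2) → ZMod 2) :
    flip v ⟨m+1, lt1 m⟩ ⟨m, lt2 m⟩ = v ⟨m, lt2 m⟩ :=
  Function.update_of_ne m_ne_m1.symm _ _

lemma e8 {m : ℕ} (v : Fin (m+2) → ZMod 2) :
    flip v ⟨m+1, lt1 m⟩ ⟨m+1, lt1 m⟩ = v ⟨m+1, lt1 m⟩ + 1 :=
  Function.update_self _ _ _

lemma e9 {m : ℕ} (v : Fin (m+2) → ZMod 2) :
    res (flip v ⟨m+1, lt1 m⟩) = res v := by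
  funext j
  show flip v _ (j.castSucc.castSucc) = _
  rw [flip, Function.update_of_ne (inner_ne_m1 j).symm]
  rfl

lemma last0 {m : ℕ} : (Fin.last m).castSucc = (⟨m, lt2 m⟩ : Fin (m+2)) := rfl

lemma last1 {m : ℕ} : Fin.last (m+1) = (⟨m+1, lt1 m⟩ : Fin (m+2)) := rfl

end Stmt11Aux

open Stmt11Aux in
/-- combining two perfect 2-colorings `f`, `g` of `Q_{n−2}` (with
quotient matrices `((n−2−b,b),(b,n−2−b))` and `((n−2−c,c),(c,n−2−c))`) into a perfect
4-coloring `h` of `Qₙ` (here `n = m + 2`), whose quotient matrix has eigenvalues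
`n`, `n−4`, `n−2(b+1)`, `n−2(c+1)`. -/
theorem stmt11 (m b c : ℕ) (f g : (Fin m → ZMod 2) → Fin 2)
    (hf : IsPerfectColoring (cubeGraph m) f (fun i j => if i = j then m - b else b))
    (hg : IsPerfectColoring (cubeGraph m) g (fun i j => if i = j then m - c else c)) :
    IsPerfectColoring (cubeGraph (m + 2))
        (fun x : Fin (m + 2) → ZMod 2 =>
          let x' : Fin m → ZMod 2 := fun i => x (i.castSucc.castSucc)
          if x ⟨m, by omega⟩ = 0 then
            (if x ⟨m + 1, by omega⟩ = 0 then (if f x' = 0 then (0 : Fin 4) else 1)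
             else (if g x' = 0 then 2 else 3))
          else
            (if x ⟨m + 1, by omega⟩ = 0 then (if g x' = 0 then 3 else 2)
             else (if f x' = 0 then 1 else 0)))
        (fun i j : Fin 4 =>
          if i.val ≤ 1 then (if j.val ≤ 1 then (if i = j then m - b else b) else 1)
          else (if j.val ≤ 1 then 1 else (if i = j then m - c else c))) ∧
      ∀ μ : ℝ,
        (μ = (m : ℝ) + 2 ∨ μ = (m : ℝ) + 2 - 4 ∨
          μ = (m : ℝ) + 2 - 2 * ((b : ℝ) + 1) ∨ μ = (m : ℝ) + 2 - 2 * ((c : ℝ) + 1)) →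
        ∃ v : Fin 4 → ℝ, v ≠ 0 ∧
          Matrix.mulVec
            (fun i j =>
              ((if i.val ≤ 1 then (if j.val ≤ 1 then (if i = j then m - b else b) else 1)
                else (if j.val ≤ 1 then 1 else (if i = j then m - c else c)) : ℕ) : ℝ)
              : Matrix (Fin 4) (Fin 4) ℝ) v = μ • v := by
  have hsumf : ∀ v : Fin m → ZMod 2,
      (if f v = 0 then m - b else b) + (if f v = 1 then m - b else b) = m := by
    intro v
    have h1 : ((cubeGraph m).neighborFinset v).card
        = ∑ k : Fin 2, (((cubeGraph m).neighborFinset v).filter (fun w => f w = k)).card :=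
      Finset.card_eq_sum_card_fiberwise (fun x _ => Finset.mem_univ _)
    rw [degree_eq, Fin.sum_univ_two, hf v 0, hf v 1] at h1
    simp only [eq_comm] at h1
    rcases fin2_cases (f v) with h | h <;> rw [h] at h1 ⊢ <;> simpa using h1.symm
  have hsumg : ∀ v : Fin m → ZMod 2,
      (if g v = 0 then m - c else c) + (if g v = 1 then m - c else c) = m := by
    intro v
    have h1 : ((cubeGraph m).neighborFinset v).card
        = ∑ k : Fin 2, (((cubeGraph m).neighborFinset v).filter (fun w => g w = k)).card :=
      Finset.card_eq_sum_card_fiberwise (fun x _ => Finset.mem_univ _)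
    rw [degree_eq, Fin.sum_univ_two, hg v 0, hg v 1] at h1
    simp only [eq_comm] at h1
    rcases fin2_cases (g v) with h | h <;> rw [h] at h1 ⊢ <;> simpa using h1.symm
  have hb : b ≤ m := by
    have := hsumf (fun _ => 0)
    rcases fin2_cases (f (fun _ => 0)) with h | h <;> rw [h] at this <;> simp at this <;> omega
  have hc : c ≤ m := by
    have := hsumg (fun _ => 0)
    rcases fin2_cases (g (fun _ => 0)) with h | h <;> rw [h] at this <;> simp at this <;> omega
  constructor
  · intro v j
    have hF : ∀ k, (∑ i : Fin m, if f (flip (res v) i) = k then 1 else 0)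
        = if f (res v) = k then m - b else b := by
      intro k
      rw [← Finset.card_filter]
      exact (count_eq (res v) (fun w => f w = k)).symm.trans (by simpa using hf (res v) k)
    have hG : ∀ k, (∑ i : Fin m, if g (flip (res v) i) = k then 1 else 0)
        = if g (res v) = k then m - c else c := by
      intro k
      rw [← Finset.card_filter]
      exact (count_eq (res v) (fun w => g w = k)).symm.trans (by simpa using hg (res v) k)
    have hkey := key (b := b) (c := c)
      (fun i => f (flip (res v) i)) (fun i => g (flip (res v) i))
      (f (res v)) (g (res v)) (v ⟨m, by omega⟩) (v ⟨m+1, by omega⟩) j hF hG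
    have hcoleq : (fun x : Fin (m + 2) → ZMod 2 =>
          let x' : Fin m → ZMod 2 := fun i => x (i.castSucc.castSucc)
          if x ⟨m, by omega⟩ = 0 then
            (if x ⟨m + 1, by omega⟩ = 0 then (if f x' = 0 then (0 : Fin 4) else 1)
             else (if g x' = 0 then 2 else 3))
          else
            (if x ⟨m + 1, by omega⟩ = 0 then (if g x' = 0 then 3 else 2)
             else (if f x' = 0 then 1 else 0)))
        = (fun w : Fin (m+2) → ZMod 2 =>
            col (w ⟨m, by omega⟩) (w ⟨m+1, by omega⟩) (f (res w)) (g (res w))) := rfl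
    rw [hcoleq]
    rw [count_eq, Finset.card_filter, Fin.sum_univ_castSucc, Fin.sum_univ_castSucc]
    simp only [last0, last1, e1, e2, e3, e4, e5, e6, e7, e8, e9]
    exact hkey
  · intro μ hμ
    have hcb : ((m - b : ℕ) : ℝ) = (m : ℝ) - b := by
      rw [Nat.cast_sub hb]
    have hcc : ((m - c : ℕ) : ℝ) = (m : ℝ) - c := by
      rw [Nat.cast_sub hc]
    rcases hμ with rfl | rfl | rfl | rfl
    · refine ⟨![1,1,1,1], fun h => by simpa using congrFun h 0, ?_⟩
      funext i
      fin_cases i <;>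
        simp +decide [Matrix.mulVec, dotProduct, Fin.sum_univ_four, hcb, hcc] <;> ring
    · refine ⟨![1,1,-1,-1], fun h => by simpa using congrFun h 0, ?_⟩
      funext i
      fin_cases i <;>
        simp +decide [Matrix.mulVec, dotProduct, Fin.sum_univ_four, hcb, hcc] <;> ring
    · refine ⟨![1,-1,0,0], fun h => by simpa using congrFun h 0, ?_⟩
      funext i
      fin_cases i <;>
        simp +decide [Matrix.mulVec, dotProduct, Fin.sum_univ_four, hcb, hcc] <;> ring
    · refine ⟨![0,0,1,-1], fun h => by simpa using congrFun h 2, ?_⟩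
      funext i
      fin_cases i <;>
        simp +decide [Matrix.mulVec, dotProduct, Fin.sum_univ_four, hcb, hcc] <;> ring
end

section
/- Every Boolean function f : Z₂ⁿ → {0,1} of degree at most 3 (as a real polynomial, equivalently having zero Fourier–Walsh coefficients on all characters of weight greater than 3) has at most 12 essential arguments. In particular, for n > 12 every degree-3 Boolean function on Z₂ⁿ has a nonessential argument. -/
open Finset

namespace NS3

variable {n : ℕ}

noncomputable def chi (S : Finset (Fin n)) (x : Fin n → ZMod 2) : ℝ :=
  ∏ i ∈ S, (-1 : ℝ) ^ (x i).val

lemma chi_eq (S : Finset (Fin n)) (x : Fin n → ZMod 2) :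
    chi S x = (-1 : ℝ) ^ (∑ i ∈ S, (x i).val) :=
  Finset.prod_pow_eq_pow_sum ..

lemma neg_one_pow_val_add (a b : ZMod 2) :
    ((-1 : ℝ)) ^ ((a + b).val) = (-1) ^ a.val * (-1) ^ b.val := by
  have e0 : ZMod.val (0 : ZMod 2) = 0 := rfl
  have e1 : ZMod.val (1 : ZMod 2) = 1 := rfl
  have e2 : ZMod.val (2 : ZMod 2) = 0 := rfl
  obtain rfl | rfl : a = 0 ∨ a = 1 := by revert a; decide
  all_goals obtain rfl | rfl : b = 0 ∨ b = 1 := by revert b; decide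
  all_goals norm_num [e0, e1, e2]

lemma chi_add (S : Finset (Fin n)) (x y : Fin n → ZMod 2) :
    chi S (x + y) = chi S x * chi S y := by
  unfold chi
  rw [← Finset.prod_mul_distrib]
  exact Finset.prod_congr rfl fun i _ => neg_one_pow_val_add (x i) (y i)

lemma chi_ne_zero (S : Finset (Fin n)) (x : Fin n → ZMod 2) : chi S x ≠ 0 := by
  unfold chi
  exact Finset.prod_ne_zero_iff.2 fun i _ => pow_ne_zero _ (by norm_num)

lemma chi_mul (S T : Finset (Fin n)) (x : Fin n → ZMod 2) :
    chi S x * chi T x = chi (symmDiff S T) x := by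
  unfold chi
  have h1 : (∏ i ∈ S ∪ T, (-1 : ℝ) ^ (x i).val) * ∏ i ∈ S ∩ T, (-1 : ℝ) ^ (x i).val
      = (∏ i ∈ S, (-1 : ℝ) ^ (x i).val) * ∏ i ∈ T, (-1 : ℝ) ^ (x i).val :=
    Finset.prod_union_inter
  have h2 : S ∪ T = symmDiff S T ∪ (S ∩ T) := by
    ext a; simp only [Finset.mem_union, Finset.mem_symmDiff, Finset.mem_inter]; tauto
  have h3 : Disjoint (symmDiff S T) (S ∩ T) := disjoint_symmDiff_inf S T
  rw [h2, Finset.prod_union h3] at h1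
  have h4 : (∏ i ∈ S ∩ T, (-1 : ℝ) ^ (x i).val) * ∏ i ∈ S ∩ T, (-1 : ℝ) ^ (x i).val = 1 := by
    rw [← Finset.prod_mul_distrib]
    apply Finset.prod_eq_one
    intro i _
    rw [← pow_add, ← two_mul, pow_mul]
    norm_num
  calc (∏ i ∈ S, (-1 : ℝ) ^ (x i).val) * ∏ i ∈ T, (-1 : ℝ) ^ (x i).val
      = (∏ i ∈ symmDiff S T, (-1 : ℝ) ^ (x i).val) *
        ((∏ i ∈ S ∩ T, (-1 : ℝ) ^ (x i).val) * ∏ i ∈ S ∩ T, (-1 : ℝ) ^ (x i).val) := by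
        rw [← h1]; ring
    _ = _ := by rw [h4, mul_one]

lemma chi_single (S : Finset (Fin n)) (i : Fin n) :
    chi S (Pi.single i 1) = if i ∈ S then -1 else 1 := by
  unfold chi
  have h : ∀ j ∈ S, (-1 : ℝ) ^ ((Pi.single i 1 : Fin n → ZMod 2) j).val
      = if j = i then -1 else 1 := by
    intro j _
    have e0 : ZMod.val (0 : ZMod 2) = 0 := rfl
    have e1 : ZMod.val (1 : ZMod 2) = 1 := rfl
    by_cases hj : j = i
    · subst hj; rw [Pi.single_eq_same, if_pos rfl, e1]; norm_num
    · rw [Pi.single_eq_of_ne hj, if_neg hj, e0]; norm_num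
  rw [Finset.prod_congr rfl h, Finset.prod_ite_eq' S i (fun _ => (-1 : ℝ))]

noncomputable def coef (g : (Fin n → ZMod 2) → ℝ) (S : Finset (Fin n)) : ℝ :=
  ∑ x, g x * chi S x

lemma zmod2_add_self (a : ZMod 2) : a + a = 0 := by revert a; decide

lemma addself (x : Fin n → ZMod 2) : x + x = 0 := by
  funext i; exact zmod2_add_self (x i)

lemma add_eq_zero_iff {x y : Fin n → ZMod 2} : x + y = 0 ↔ x = y := by
  constructor
  · intro h
    have := congrArg (· + y) h
    simpa [add_assoc, addself] using this
  · intro h; rw [h]; exact addself y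

lemma sum_chi (z : Fin n → ZMod 2) :
    ∑ S : Finset (Fin n), chi S z = if z = 0 then (2 : ℝ) ^ n else 0 := by
  have key : ∏ i : Fin n, ((-1 : ℝ) ^ (z i).val + 1)
      = ∑ S : Finset (Fin n), chi S z := by
    rw [Finset.prod_add, ← Finset.powerset_univ]
    exact Finset.sum_congr rfl fun S _ => by simp [chi]
  rw [← key]
  by_cases hz : z = 0
  · subst hz
    rw [if_pos rfl]
    have h2 : ∀ i : Fin n, ((-1 : ℝ) ^ ((0 : Fin n → ZMod 2) i).val + 1) = 2 := by
      intro i; norm_num [show ZMod.val (0 : ZMod 2) = 0 from rfl]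
    rw [Finset.prod_congr rfl (fun i _ => h2 i), Finset.prod_const]
    simp
  · rw [if_neg hz]
    obtain ⟨i, hi⟩ : ∃ i, z i ≠ 0 := by
      by_contra h; push_neg at h; exact hz (funext h)
    apply Finset.prod_eq_zero (Finset.mem_univ i)
    have hz1 : z i = 1 := by
      have h01 : ∀ a : ZMod 2, a ≠ 0 → a = 1 := by decide
      exact h01 _ hi
    rw [hz1, show ZMod.val (1 : ZMod 2) = 1 from rfl]
    norm_num

lemma inversion (g : (Fin n → ZMod 2) → ℝ) (y : Fin n → ZMod 2) :
    (2 : ℝ) ^ n * g y = ∑ S : Finset (Fin n), coef g S * chi S y := by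
  unfold coef
  symm
  calc ∑ S : Finset (Fin n), (∑ x, g x * chi S x) * chi S y
      = ∑ S : Finset (Fin n), ∑ x, g x * chi S (x + y) := by
        refine Finset.sum_congr rfl fun S _ => ?_
        rw [Finset.sum_mul]
        exact Finset.sum_congr rfl fun x _ => by rw [chi_add, mul_assoc]
    _ = ∑ x, g x * ∑ S : Finset (Fin n), chi S (x + y) := by
        rw [Finset.sum_comm]
        exact Finset.sum_congr rfl fun x _ => by rw [Finset.mul_sum]
    _ = ∑ x, g x * if x = y then (2 : ℝ) ^ n else 0 := by
        refine Finset.sum_congr rfl fun x _ => ?_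
        rw [sum_chi]
        congr 1
        simp [add_eq_zero_iff]
    _ = (2 : ℝ) ^ n * g y := by
        simp only [mul_ite, mul_zero]
        rw [Finset.sum_ite_eq' Finset.univ y (fun x => g x * (2:ℝ)^n)]
        simp [mul_comm]

lemma plancherel (g h : (Fin n → ZMod 2) → ℝ) :
    ∑ S : Finset (Fin n), coef g S * coef h S = (2 : ℝ) ^ n * ∑ x, g x * h x := by
  unfold coef
  calc ∑ S : Finset (Fin n), (∑ x, g x * chi S x) * (∑ y, h y * chi S y)
      = ∑ S : Finset (Fin n), ∑ x, ∑ y, g x * h y * chi S (x + y) := by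
        refine Finset.sum_congr rfl fun S _ => ?_
        rw [Finset.sum_mul_sum]
        refine Finset.sum_congr rfl fun x _ => Finset.sum_congr rfl fun y _ => ?_
        rw [chi_add]; ring
    _ = ∑ x, ∑ y, g x * h y * ∑ S : Finset (Fin n), chi S (x + y) := by
        rw [Finset.sum_comm]
        refine Finset.sum_congr rfl fun x _ => ?_
        rw [Finset.sum_comm]
        exact Finset.sum_congr rfl fun y _ => by rw [Finset.mul_sum]
    _ = ∑ x, ∑ y, (if y = x then g x * h y * (2:ℝ)^n else 0) := by
        refine Finset.sum_congr rfl fun x _ => Finset.sum_congr rfl fun y _ => ?_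
        rw [sum_chi]
        by_cases hxy : y = x
        · subst hxy; simp [addself]
        · rw [if_neg hxy, if_neg, mul_zero]
          intro hc
          exact hxy (add_eq_zero_iff.1 hc).symm
    _ = (2 : ℝ) ^ n * ∑ x, g x * h x := by
        rw [Finset.mul_sum]
        refine Finset.sum_congr rfl fun x _ => ?_
        rw [Finset.sum_ite_eq' Finset.univ x (fun y => g x * h y * (2:ℝ)^n)]
        simp [mul_comm]

lemma coef_shift (g : (Fin n → ZMod 2) → ℝ) (e : Fin n → ZMod 2) (S : Finset (Fin n)) :
    coef (fun x => g (x + e)) S = chi S e * coef g S := by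
  unfold coef
  rw [Finset.mul_sum]
  refine Fintype.sum_equiv (Equiv.addRight e) _ _ fun x => ?_
  simp only [Equiv.coe_addRight]
  rw [chi_add]
  have h1 : chi S e * chi S e = 1 := by
    rw [chi_mul, symmDiff_self]
    simp [chi]
  linear_combination (-(g (x + e) * chi S x)) * h1

lemma coef_mul_chi (g : (Fin n → ZMod 2) → ℝ) (T S : Finset (Fin n)) :
    coef (fun x => g x * chi T x) S = coef g (symmDiff S T) := by
  unfold coef
  refine Finset.sum_congr rfl fun x _ => ?_
  rw [mul_assoc, mul_comm (chi T x) (chi S x), chi_mul]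

lemma coef_sub (g h : (Fin n → ZMod 2) → ℝ) (S : Finset (Fin n)) :
    coef (fun x => g x - h x) S = coef g S - coef h S := by
  unfold coef
  rw [← Finset.sum_sub_distrib]
  exact Finset.sum_congr rfl fun x _ => by ring

lemma eq_zero_of_coef {g : (Fin n → ZMod 2) → ℝ} (h : ∀ S, coef g S = 0) :
    ∀ x, g x = 0 := by
  intro y
  have := inversion g y
  simp only [h, zero_mul, Finset.sum_const_zero] at this
  have h2 : (0:ℝ) < 2 ^ n := by positivity
  nlinarith

open Classical in
noncomputable def supp (g : (Fin n → ZMod 2) → ℝ) : Finset (Fin n → ZMod 2) :=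
  Finset.univ.filter (fun x => g x ≠ 0)

lemma mem_supp {g : (Fin n → ZMod 2) → ℝ} {x : Fin n → ZMod 2} :
    x ∈ supp g ↔ g x ≠ 0 := by
  classical
  simp [supp]

lemma card_V : Fintype.card (Fin n → ZMod 2) = 2 ^ n := by
  simp [Fintype.card_fun]

lemma const_case {g : (Fin n → ZMod 2) → ℝ}
    (hc : ∀ T : Finset (Fin n), T ≠ ∅ → coef g T = 0) (hx : ∃ x, g x ≠ 0) :
    supp g = Finset.univ := by
  have key : ∀ y, (2:ℝ)^n * g y = coef g ∅ := by
    intro y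
    rw [inversion g y, Finset.sum_eq_single ∅]
    · simp [chi]
    · intro S _ hS; rw [hc S hS, zero_mul]
    · simp
  obtain ⟨x0, hx0⟩ := hx
  have h2 : (0:ℝ) < 2 ^ n := by positivity
  have hne : coef g ∅ ≠ 0 := by
    intro h
    have := key x0
    rw [h] at this
    exact hx0 (by nlinarith)
  ext y
  simp only [Finset.mem_univ, iff_true, mem_supp]
  intro hy
  have := key y
  rw [hy, mul_zero] at this
  exact hne this.symm

lemma coef_zero_of_all_zero {g : (Fin n → ZMod 2) → ℝ} (h : ∀ x, g x = 0) (S : Finset (Fin n)) :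
    coef g S = 0 := by
  unfold coef
  simp [h]

lemma SZ (d : ℕ) : ∀ g : (Fin n → ZMod 2) → ℝ,
    (∀ T : Finset (Fin n), d < T.card → coef g T = 0) → (∃ x, g x ≠ 0) →
    2 ^ n ≤ 2 ^ d * (supp g).card := by
  induction d with
  | zero =>
    intro g hdeg hx
    have hc : ∀ T : Finset (Fin n), T ≠ ∅ → coef g T = 0 := by
      intro T hT
      exact hdeg T (Finset.card_pos.2 (Finset.nonempty_iff_ne_empty.2 hT))
    rw [const_case hc hx, Finset.card_univ, card_V]
    omega
  | succ d ih =>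
    intro g hdeg hx
    by_cases hc : ∀ T : Finset (Fin n), T ≠ ∅ → coef g T = 0
    · rw [const_case hc hx, Finset.card_univ, card_V]
      exact Nat.le_mul_of_pos_left (2 ^ n) (Nat.two_pow_pos (d + 1))
    · push_neg at hc
      obtain ⟨T, hTne, hcT⟩ := hc
      obtain ⟨i, hiT⟩ := hTne
      set e : Fin n → ZMod 2 := Pi.single i 1 with he
      set h : (Fin n → ZMod 2) → ℝ := fun x => (g (x + e) - g x) * chi {i} x with hh
      have hDg : ∀ S : Finset (Fin n), coef (fun x => g (x + e) - g x) S
          = (chi S e - 1) * coef g S := by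
        intro S
        rw [coef_sub (fun x => g (x + e)) g, coef_shift]
        ring
      have hch : ∀ U : Finset (Fin n), coef h U
          = (chi (symmDiff U {i}) e - 1) * coef g (symmDiff U {i}) := by
        intro U
        rw [hh, coef_mul_chi (fun x => g (x + e) - g x) {i} U, hDg]
      have hdegh : ∀ U : Finset (Fin n), d < U.card → coef h U = 0 := by
        intro U hU
        rw [hch]
        by_cases hiU : i ∈ U
        · have : chi (symmDiff U {i}) e = 1 := by
            rw [chi_single]
            rw [if_neg]
            simp [Finset.mem_symmDiff, hiU]
          rw [this]
          ring
        · have hins : symmDiff U {i} = insert i U := by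
            ext j
            simp only [Finset.mem_symmDiff, Finset.mem_singleton, Finset.mem_insert]
            by_cases hj : j = i <;> simp [hj, hiU] <;> tauto
          rw [hins, hdeg _ (by rw [Finset.card_insert_of_notMem hiU]; omega)]
          ring
      have hhne : ∃ x, h x ≠ 0 := by
        by_contra hcon
        push_neg at hcon
        have h0 : coef h (symmDiff T {i}) = 0 := coef_zero_of_all_zero hcon _
        rw [hch, symmDiff_symmDiff_cancel_right] at h0
        have : chi T e = -1 := by rw [chi_single, if_pos hiT]
        rw [this] at h0
        apply hcT
        nlinarith
      have hmain := ih h hdegh hhne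
      -- card bound : supp h ⊆ shifted supp ∪ supp g
      have hsub : supp h ⊆ (supp g).image (fun x => x + e) ∪ supp g := by
        intro x hxh
        rw [mem_supp] at hxh
        have hxh' : (g (x + e) - g x) * chi {i} x ≠ 0 := hxh
        have hne : g (x + e) - g x ≠ 0 := by
          intro hcon; apply hxh'; rw [hcon, zero_mul]
        rw [Finset.mem_union, Finset.mem_image]
        by_cases hgx : g x = 0
        · left
          refine ⟨x + e, ?_, ?_⟩
          · rw [mem_supp]; intro hcon; apply hne; rw [hcon, hgx, sub_zero]
          · rw [add_assoc, addself, add_zero]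
        · right; exact mem_supp.2 hgx
      have hcard : (supp h).card ≤ 2 * (supp g).card := by
        calc (supp h).card ≤ ((supp g).image (fun x => x + e) ∪ supp g).card :=
              Finset.card_le_card hsub
          _ ≤ ((supp g).image (fun x => x + e)).card + (supp g).card :=
              Finset.card_union_le _ _
          _ ≤ (supp g).card + (supp g).card := by
              have := Finset.card_image_le (s := supp g) (f := fun x => x + e)
              omega
          _ = 2 * (supp g).card := by ring
      calc 2 ^ n ≤ 2 ^ d * (supp h).card := hmain
        _ ≤ 2 ^ d * (2 * (supp g).card) := Nat.mul_le_mul_left _ hcard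
        _ = 2 ^ (d + 1) * (supp g).card := by ring
lemma val01 : ∀ a : ZMod 2, a.val = 0 ∨ a.val = 1 := by decide

lemma val_inj2 : ∀ a b : ZMod 2, a.val = b.val → a = b := by decide

lemma lower (f : (Fin n → ZMod 2) → ZMod 2)
    (h3 : ∀ S : Finset (Fin n), 3 < S.card → coef (fun x => ((f x).val : ℝ)) S = 0)
    (i : Fin n) (hi : ∃ x, f (x + Pi.single i 1) ≠ f x) :
    2 ^ n ≤ 4 * (Finset.univ.filter (fun x => f (x + Pi.single i 1) ≠ f x)).card := by
  classical
  set F : (Fin n → ZMod 2) → ℝ := fun x => ((f x).val : ℝ) with hF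
  set e : Fin n → ZMod 2 := Pi.single i 1 with he
  set h : (Fin n → ZMod 2) → ℝ := fun x => (F (x + e) - F x) * chi {i} x with hh
  have hch : ∀ U : Finset (Fin n), coef h U
      = (chi (symmDiff U {i}) e - 1) * coef F (symmDiff U {i}) := by
    intro U
    rw [hh, coef_mul_chi (fun x => F (x + e) - F x) {i} U,
        coef_sub (fun x => F (x + e)) F, coef_shift]
    ring
  have hdegh : ∀ U : Finset (Fin n), 2 < U.card → coef h U = 0 := by
    intro U hU
    rw [hch]
    by_cases hiU : i ∈ U
    · have : chi (symmDiff U {i}) e = 1 := by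
        rw [he, chi_single, if_neg]
        simp [Finset.mem_symmDiff, hiU]
      rw [this]; ring
    · have hins : symmDiff U {i} = insert i U := by
        ext j
        simp only [Finset.mem_symmDiff, Finset.mem_singleton, Finset.mem_insert]
        by_cases hj : j = i <;> simp [hj, hiU] <;> tauto
      rw [hins, h3 _ (by rw [Finset.card_insert_of_notMem hiU]; omega)]
      ring
  have hne : ∃ x, h x ≠ 0 := by
    obtain ⟨x, hx⟩ := hi
    refine ⟨x, ?_⟩
    have h1 : F (x + e) - F x ≠ 0 := by
      intro hcon
      apply hx
      apply val_inj2
      have h2 : ((f (x + e)).val : ℝ) = ((f x).val : ℝ) := sub_eq_zero.mp hcon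
      exact_mod_cast h2
    exact mul_ne_zero h1 (chi_ne_zero _ _)
  have hSZ := SZ 2 h hdegh hne
  have hsupp : supp h = Finset.univ.filter (fun x => f (x + Pi.single i 1) ≠ f x) := by
    ext x
    rw [mem_supp, Finset.mem_filter]
    constructor
    · intro hx
      refine ⟨Finset.mem_univ x, ?_⟩
      intro hcon
      apply hx
      show (F (x + e) - F x) * chi {i} x = 0
      have hFe : F (x + e) = F x := by
        show ((f (x + e)).val : ℝ) = ((f x).val : ℝ)
        rw [he, hcon]
      rw [hFe]; ring
    · rintro ⟨-, hx⟩ hcon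
      have hcon' : (F (x + e) - F x) * chi {i} x = 0 := hcon
      rcases mul_eq_zero.mp hcon' with h1 | h1
      · apply hx
        apply val_inj2
        have h2 : ((f (x + e)).val : ℝ) = ((f x).val : ℝ) := sub_eq_zero.mp h1
        rw [← he]
        exact_mod_cast h2
      · exact chi_ne_zero _ _ h1
  rw [hsupp] at hSZ
  simpa using hSZ

lemma upper (f : (Fin n → ZMod 2) → ZMod 2)
    (h3 : ∀ S : Finset (Fin n), 3 < S.card → coef (fun x => ((f x).val : ℝ)) S = 0) :
    ∑ i : Fin n, (((Finset.univ.filter (fun x => f (x + Pi.single i 1) ≠ f x)).card : ℝ))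
      ≤ 3 * 2 ^ n := by
  classical
  set F : (Fin n → ZMod 2) → ℝ := fun x => ((f x).val : ℝ) with hF
  set c : Finset (Fin n) → ℝ := fun S => coef F S with hc
  set m : ℝ := ∑ x, F x with hm
  set A : ℝ := ∑ S : Finset (Fin n), c S ^ 2 with hA
  have hFF : ∀ x, F x * F x = F x := by
    intro x
    rcases val01 (f x) with h | h <;> · rw [hF]; simp only; rw [h]; norm_num
  have hparse : A = 2 ^ n * m := by
    rw [hA, hm]
    have := plancherel (n := n) F F
    rw [Finset.sum_congr rfl (fun x (_ : x ∈ Finset.univ) => hFF x)] at this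
    rw [← this]
    exact Finset.sum_congr rfl fun S _ => (sq (c S)).symm ▸ (by ring)
  have hempty : c ∅ = m := by
    rw [hc]; simp only [coef, chi]
    rw [hm]
    exact Finset.sum_congr rfl fun x _ => by simp
  -- key identity per coordinate
  have key : ∀ i : Fin n,
      (((Finset.univ.filter (fun x => f (x + Pi.single i 1) ≠ f x)).card : ℝ)) * 2 ^ n
      = 2 * ∑ S : Finset (Fin n), (1 - chi S (Pi.single i 1)) * c S ^ 2 := by
    intro i
    set e : Fin n → ZMod 2 := Pi.single i 1 with he
    set S1 : ℝ := ∑ x, F x * F x with hS1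
    set S2 : ℝ := ∑ x, F (x + e) * F x with hS2
    have hcard : (((Finset.univ.filter (fun x => f (x + Pi.single i 1) ≠ f x)).card : ℝ))
        = ∑ x, (F (x + e) - F x) ^ 2 := by
      rw [Finset.card_filter]
      push_cast
      refine Finset.sum_congr rfl fun x _ => ?_
      have hv : ∀ a b : ZMod 2, (if a ≠ b then (1:ℝ) else 0) = ((a.val : ℝ) - b.val) ^ 2 := by
        intro a b
        have e0 : ZMod.val (0 : ZMod 2) = 0 := rfl
        have e1 : ZMod.val (1 : ZMod 2) = 1 := rfl
        obtain rfl | rfl : a = 0 ∨ a = 1 := by revert a; decide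
        all_goals obtain rfl | rfl : b = 0 ∨ b = 1 := by revert b; decide
        all_goals norm_num [e0, e1]
      exact hv (f (x + e)) (f x)
    have hexp : ∑ x, (F (x + e) - F x) ^ 2 = 2 * S1 - 2 * S2 := by
      have hP3 : ∑ x, F (x + e) * F (x + e) = S1 := by
        rw [hS1]
        refine Fintype.sum_equiv (Equiv.addRight e) _ _ fun x => ?_
        simp only [Equiv.coe_addRight]
      have step : ∀ x, (F (x + e) - F x) ^ 2
          = F (x + e) * F (x + e) - 2 * (F (x + e) * F x) + F x * F x := by
        intro x; ring
      rw [Finset.sum_congr rfl fun x _ => step x]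
      rw [Finset.sum_add_distrib, Finset.sum_sub_distrib, ← Finset.mul_sum, hP3, ← hS1, ← hS2]
      ring
    have hP1 : A = 2 ^ n * S1 := by
      rw [hA, hS1, ← plancherel (n := n) F F]
      exact Finset.sum_congr rfl fun S _ => by rw [hc]; simp only; ring
    have hP2 : ∑ S : Finset (Fin n), chi S e * c S ^ 2 = 2 ^ n * S2 := by
      rw [hS2, ← plancherel (n := n) (fun x => F (x + e)) F]
      refine Finset.sum_congr rfl fun S _ => ?_
      rw [coef_shift F e S, hc]
      simp only
      ring
    have hsplit : ∑ S : Finset (Fin n), (1 - chi S e) * c S ^ 2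
        = A - ∑ S : Finset (Fin n), chi S e * c S ^ 2 := by
      rw [hA, ← Finset.sum_sub_distrib]
      exact Finset.sum_congr rfl fun S _ => by ring
    calc (((Finset.univ.filter (fun x => f (x + Pi.single i 1) ≠ f x)).card : ℝ)) * 2 ^ n
        = (2 * S1 - 2 * S2) * 2 ^ n := by rw [hcard, hexp]
      _ = 2 * (2 ^ n * S1) - 2 * (2 ^ n * S2) := by ring
      _ = 2 * (A - ∑ S : Finset (Fin n), chi S e * c S ^ 2) := by rw [← hP1, ← hP2]; ring
      _ = 2 * ∑ S : Finset (Fin n), (1 - chi S e) * c S ^ 2 := by rw [hsplit]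
  -- sum the key identity over i
  have hcount : ∀ S : Finset (Fin n),
      ∑ i : Fin n, ((1 : ℝ) - chi S (Pi.single i 1)) = 2 * S.card := by
    intro S
    have hterm : ∀ i : Fin n, (1 : ℝ) - chi S (Pi.single i 1) = if i ∈ S then 2 else 0 := by
      intro i
      rw [chi_single]
      by_cases h : i ∈ S <;> simp [h] <;> norm_num
    rw [Finset.sum_congr rfl fun i _ => hterm i, Finset.sum_ite_mem, Finset.univ_inter,
        Finset.sum_const]
    simp [mul_comm]
  have hsum : (∑ i : Fin n,
      (((Finset.univ.filter (fun x => f (x + Pi.single i 1) ≠ f x)).card : ℝ))) * 2 ^ n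
      = 4 * ∑ S : Finset (Fin n), (S.card : ℝ) * c S ^ 2 := by
    rw [Finset.sum_mul]
    rw [Finset.sum_congr rfl fun i _ => key i]
    rw [← Finset.mul_sum, Finset.sum_comm]
    rw [Finset.mul_sum, Finset.mul_sum]
    refine Finset.sum_congr rfl fun S _ => ?_
    rw [← Finset.sum_mul, hcount S]
    ring
  have hbound : ∑ S : Finset (Fin n), (S.card : ℝ) * c S ^ 2 ≤ 3 * A - 3 * c ∅ ^ 2 := by
    have per : ∀ S : Finset (Fin n), (S.card : ℝ) * c S ^ 2
        ≤ (if S = ∅ then 0 else 3) * c S ^ 2 := by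
      intro S
      by_cases h0 : S = ∅
      · subst h0; simp
      · rw [if_neg h0]
        by_cases h3' : S.card ≤ 3
        · have hle : (S.card : ℝ) ≤ 3 := by exact_mod_cast h3'
          nlinarith [sq_nonneg (c S)]
        · have : c S = 0 := by rw [hc]; exact h3 S (by omega)
          rw [this]
          norm_num
    calc ∑ S : Finset (Fin n), (S.card : ℝ) * c S ^ 2
        ≤ ∑ S : Finset (Fin n), (if S = ∅ then (0:ℝ) else 3) * c S ^ 2 :=
          Finset.sum_le_sum fun S _ => per S
      _ = 3 * A - 3 * c ∅ ^ 2 := by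
          have hterm : ∀ S : Finset (Fin n), (if S = ∅ then (0:ℝ) else 3) * c S ^ 2
              = 3 * c S ^ 2 - (if S = ∅ then 3 * c S ^ 2 else 0) := by
            intro S; by_cases h : S = ∅ <;> simp [h]
          rw [Finset.sum_congr rfl fun S _ => hterm S, Finset.sum_sub_distrib,
              ← Finset.mul_sum, Finset.sum_ite_eq' Finset.univ ∅ (fun S => 3 * c S ^ 2)]
          simp [hA]
  have hfinal : (∑ i : Fin n,
      (((Finset.univ.filter (fun x => f (x + Pi.single i 1) ≠ f x)).card : ℝ))) * 2 ^ n
      ≤ 3 * 2 ^ n * 2 ^ n := by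
    rw [hsum]
    have h1 : 4 * (∑ S : Finset (Fin n), (S.card : ℝ) * c S ^ 2) ≤ 4 * (3 * A - 3 * c ∅ ^ 2) := by
      linarith
    have h2 : 4 * (3 * A - 3 * c ∅ ^ 2) ≤ 3 * 2 ^ n * 2 ^ n := by
      rw [hparse, hempty]
      nlinarith [sq_nonneg ((2:ℝ) ^ n - 2 * m)]
    linarith
  have hpos : (0:ℝ) < 2 ^ n := by positivity
  exact le_of_mul_le_mul_right hfinal hpos

theorem main_bound (f : (Fin n → ZMod 2) → ZMod 2)
    (h3 : ∀ S : Finset (Fin n), 3 < S.card → coef (fun x => ((f x).val : ℝ)) S = 0) :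
    (Finset.univ.filter (fun i : Fin n => ∃ x, f (x + Pi.single i 1) ≠ f x)).card ≤ 12 := by
  classical
  set E := Finset.univ.filter (fun i : Fin n => ∃ x, f (x + Pi.single i 1) ≠ f x) with hE
  set N : Fin n → ℕ := fun i => (Finset.univ.filter (fun x => f (x + Pi.single i 1) ≠ f x)).card
    with hN
  have hlow : ∀ i ∈ E, 2 ^ n ≤ 4 * N i := by
    intro i hi
    rw [hE, Finset.mem_filter] at hi
    exact lower f h3 i hi.2
  have h1 : E.card * 2 ^ n ≤ ∑ i ∈ E, 4 * N i := by
    calc E.card * 2 ^ n = ∑ _i ∈ E, 2 ^ n := by rw [Finset.sum_const]; ring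
      _ ≤ ∑ i ∈ E, 4 * N i := Finset.sum_le_sum hlow
  have h2 : ((∑ i ∈ E, 4 * N i : ℕ) : ℝ) ≤ 12 * 2 ^ n := by
    push_cast
    have hsub : ∑ i ∈ E, 4 * (N i : ℝ) ≤ ∑ i : Fin n, 4 * (N i : ℝ) := by
      apply Finset.sum_le_sum_of_subset_of_nonneg (Finset.subset_univ E)
      intro i _ _
      positivity
    have hup := upper f h3
    calc ∑ i ∈ E, 4 * (N i : ℝ) ≤ ∑ i : Fin n, 4 * (N i : ℝ) := hsub
      _ = 4 * ∑ i : Fin n, (N i : ℝ) := by rw [Finset.mul_sum]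
      _ ≤ 4 * (3 * 2 ^ n) := by linarith
      _ = 12 * 2 ^ n := by ring
  have h3' : (E.card : ℝ) * 2 ^ n ≤ 12 * 2 ^ n := by
    calc (E.card : ℝ) * 2 ^ n = ((E.card * 2 ^ n : ℕ) : ℝ) := by push_cast; ring
      _ ≤ ((∑ i ∈ E, 4 * N i : ℕ) : ℝ) := by exact_mod_cast h1
      _ ≤ 12 * 2 ^ n := h2
  have hpos : (0:ℝ) < 2 ^ n := by positivity
  have : (E.card : ℝ) ≤ 12 := le_of_mul_le_mul_right h3' hpos
  exact_mod_cast this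

end NS3

/-- Nisan–Szegedy for `d = 3`: a Boolean function of degree at most 3
(all Fourier–Walsh coefficients on characters of weight `> 3` vanish) has at most
`3·2² = 12` essential arguments; in particular, for `n > 12` it has a nonessential
argument. -/
theorem stmt14 (n : ℕ) (f : (Fin n → ZMod 2) → ZMod 2)
    (hdeg : ∀ s : Finset (Fin n), 3 < s.card →
      ∑ x : Fin n → ZMod 2, ((f x).val : ℝ) * (-1) ^ (∑ i ∈ s, (x i).val) = 0) :
    {i : Fin n | ∃ x, f (x + Pi.single i 1) ≠ f x}.ncard ≤ 12 ∧
      (12 < n → ∃ i : Fin n, ∀ x, f (x + Pi.single i 1) = f x) := by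
  classical
  have h3 : ∀ S : Finset (Fin n), 3 < S.card →
      NS3.coef (fun x => ((f x).val : ℝ)) S = 0 := by
    intro S hS
    simp only [NS3.coef, NS3.chi_eq]
    exact hdeg S hS
  have hmain := NS3.main_bound f h3
  constructor
  · have hcard : {i : Fin n | ∃ x, f (x + Pi.single i 1) ≠ f x}.ncard
        = (Finset.univ.filter (fun i : Fin n => ∃ x, f (x + Pi.single i 1) ≠ f x)).card := by
      rw [Set.ncard_eq_toFinset_card']
      congr 1
      ext i
      simp [Set.mem_toFinset]
    rw [hcard]
    exact hmain
  · intro hn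
    by_contra hcon
    push_neg at hcon
    have hall : Finset.univ.filter (fun i : Fin n => ∃ x, f (x + Pi.single i 1) ≠ f x)
        = Finset.univ := by
      apply Finset.filter_true_of_mem
      intro i _
      exact hcon i
    rw [hall, Finset.card_univ, Fintype.card_fin] at hmain
    omega
end

section
/- Define g : Z₂⁹ → Z₂² by g(x₀,…,x₈) = (x₀+x₁, x₀+x₂) ⋆ (x₃+x₄, x₃+x₅) + (x₆+x₇, x₆+x₈), where ⋆ is the group operation of the Klein four-group on Z₂² (componentwise addition) and + on the right is also componentwise addition in Z₂². Then the 2-coloring f of Q₉ that colors a vertex x with color 1 if g(x) = (0,0) and color 0 otherwise is a perfect 2-coloring with quotient matrix ((0, 9),(3, 6)). -/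
set_option maxHeartbeats 2000000
set_option maxRecDepth 10000

open Finset

lemma zmod2_ne : ∀ a b : ZMod 2, a ≠ b ↔ b = a + 1 := by decide

lemma adj_iff {n : ℕ} (v y : Fin n → ZMod 2) :
    (cubeGraph n).Adj v y ↔ ∃ i, y = Function.update v i (v i + 1) := by
  constructor
  · intro h
    change hammingDist v y = 1 at h
    rw [hammingDist, Finset.card_eq_one] at h
    obtain ⟨i, hi⟩ := h
    refine ⟨i, ?_⟩
    have hmem : ∀ j : Fin n, v j ≠ y j ↔ j = i := by
      intro j
      constructor
      · intro hj
        have hj2 : j ∈ (univ.filter fun k => v k ≠ y k) := by simp [hj]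
        rw [hi] at hj2; simpa using hj2
      · rintro rfl
        have hj2 : j ∈ (univ.filter fun k => v k ≠ y k) := by rw [hi]; simp
        simpa using hj2
    funext j
    by_cases hj : j = i
    · subst hj
      rw [Function.update_self]
      exact (zmod2_ne _ _).mp ((hmem j).mpr rfl)
    · rw [Function.update_of_ne hj]
      by_contra hne
      exact hj ((hmem j).mp (fun h => hne h.symm))
  · rintro ⟨i, rfl⟩
    show hammingDist _ _ = 1
    rw [hammingDist]
    have key : (univ.filter fun j => v j ≠ Function.update v i (v i + 1) j) = {i} := by
      ext j
      by_cases hj : j = i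
      · subst hj; simp [Function.update_self]
      · simp [hj, Function.update_of_ne hj]
    rw [key, card_singleton]

lemma update_inj {n : ℕ} (v : Fin n → ZMod 2) :
    Function.Injective (fun i => Function.update v i (v i + 1)) := by
  intro i j h
  by_contra hne
  have h2 := congrFun h i
  simp only [Function.update_self, Function.update_of_ne hne] at h2
  simp at h2

lemma card_lemma {n : ℕ} (v : Fin n → ZMod 2) (p : (Fin n → ZMod 2) → Prop)
    [DecidablePred p] :
    (((cubeGraph n).neighborFinset v).filter p).card =
      (univ.filter fun i : Fin n => p (Function.update v i (v i + 1))).card := by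
  have h1 : (cubeGraph n).neighborFinset v =
      univ.image (fun i => Function.update v i (v i + 1)) := by
    ext y
    rw [SimpleGraph.mem_neighborFinset, adj_iff]
    simp [eq_comm]
  rw [h1, Finset.filter_image, Finset.card_image_of_injective _ (update_inj v)]

/-- the 2-coloring of `Q₉` whose first color class is the solution set of
`(x₀+x₁, x₀+x₂) ⋆ (x₃+x₄, x₃+x₅) = (x₆+x₇, x₆+x₈)` with `⋆` the Klein four-group
operation (coordinatewise XOR) is a perfect 2-coloring with quotient matrix
`((0,9),(3,6))` (rows indexed by colors 1, 0). -/
theorem stmt18 :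
    IsPerfectColoring (cubeGraph 9)
      (fun x : Fin 9 → ZMod 2 =>
        if x 0 + x 1 + x 3 + x 4 = x 6 + x 7 ∧ x 0 + x 2 + x 3 + x 5 = x 6 + x 8
        then (1 : Fin 2) else 0)
      (fun i j =>
        if i = 1 then (if j = 1 then 0 else 9) else (if j = 1 then 3 else 6)) := by
  unfold IsPerfectColoring
  simp only [card_lemma]
  decide
end
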